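/- arXiv:1211.6220 — 4 statements merged into one kernel-verified Lean document; each statement's English description precedes it below -/
import Mathlib

section
/- Let f : ℝ^n → ℝ^n be C² with |Df(y)| ≤ K₁ and |D²f(y)| ≤ K₂ for all y, and let g : ℝ^n → ℝ^n be C¹ with |g(y)| ≤ G and |Dg(y)| ≤ G for all y. Let T > 0, and let y, y_ε, φ : [0, T] → ℝ^n be differentiable with y'(t) = f(y(t)), y_ε'(t) = f(y_ε(t)) + ε·g(y_ε(t)), y(0) = y_ε(0), and φ'(t) = Df(y(t))·φ(t) + g(y(t)) with φ(0) = 0. Then there exists a constant C, depending only on K₁, K₂, G and T, such that for all t ∈ [0, T] and all ε ∈ (0, 1], |y_ε(t) − y(t) − ε·φ(t)| ≤ C ε². -/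
set_option maxHeartbeats 1000000 in
/-- Second-order accuracy of the linearization of an ODE with respect to a
perturbation of its right-hand side: if `y' = f(y)`, `y_ε' = f(y_ε) + ε g(y_ε)`
with the same initial data, and `φ` solves the linearized equation
`φ' = Df(y(t))·φ + g(y(t))`, `φ(0) = 0`, then `|y_ε(t) − y(t) − ε φ(t)| ≤ C ε²`
on `[0, T]`, with `C` depending only on the bounds `K₁, K₂, G` and `T`. -/
theorem stmt6 {n : ℕ} (K₁ K₂ G T : ℝ)
    (hK₁ : 0 < K₁) (hK₂ : 0 < K₂) (hG : 0 < G) (hT : 0 < T) :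
    ∃ C : ℝ,
      ∀ (f g : EuclideanSpace ℝ (Fin n) → EuclideanSpace ℝ (Fin n)),
        ContDiff ℝ 2 f →
        (∀ y, ‖fderiv ℝ f y‖ ≤ K₁) →
        (∀ y, ‖iteratedFDeriv ℝ 2 f y‖ ≤ K₂) →
        ContDiff ℝ 1 g →
        (∀ y, ‖g y‖ ≤ G) →
        (∀ y, ‖fderiv ℝ g y‖ ≤ G) →
        ∀ ε ∈ Set.Ioc (0 : ℝ) 1,
        ∀ (y yε φ : ℝ → EuclideanSpace ℝ (Fin n)),
          (∀ t ∈ Set.Icc (0 : ℝ) T, HasDerivAt y (f (y t)) t) →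
          (∀ t ∈ Set.Icc (0 : ℝ) T, HasDerivAt yε (f (yε t) + ε • g (yε t)) t) →
          y 0 = yε 0 →
          (∀ t ∈ Set.Icc (0 : ℝ) T,
            HasDerivAt φ (fderiv ℝ f (y t) (φ t) + g (y t)) t) →
          φ 0 = 0 →
          ∀ t ∈ Set.Icc (0 : ℝ) T, ‖yε t - y t - ε • φ t‖ ≤ C * ε ^ 2 := by
  set E := EuclideanSpace ℝ (Fin n)
  have hexp : (0:ℝ) ≤ Real.exp (K₁ * T) - 1 := by
    have : (1:ℝ) ≤ Real.exp (K₁ * T) := Real.one_le_exp (by positivity)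
    linarith
  set C₁ : ℝ := G / K₁ * (Real.exp (K₁ * T) - 1) with hC₁def
  have hC₁ : 0 ≤ C₁ := by positivity
  set M : ℝ := K₂ * C₁ ^ 2 + G * C₁ with hMdef
  have hM : 0 ≤ M := by positivity
  refine ⟨M / K₁ * (Real.exp (K₁ * T) - 1), ?_⟩
  intro f g hf hb1 hb2 hg hgb hgb' ε hε y yε φ hy hyε h0 hφ hφ0
  obtain ⟨hε0, hε1⟩ := hε
  -- differentiability facts
  have hfd : Differentiable ℝ f := hf.differentiable (by norm_num)
  have hgd : Differentiable ℝ g := hg.differentiable (by norm_num)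
  have hf'd : Differentiable ℝ (fderiv ℝ f) :=
    (hf.fderiv_right (m := 1) (by norm_num)).differentiable (by norm_num)
  -- bound on second derivative of f as fderiv of fderiv
  have hfd2 : ∀ x, ‖fderiv ℝ (fderiv ℝ f) x‖ ≤ K₂ := by
    intro x
    refine ContinuousLinearMap.opNorm_le_bound _ hK₂.le fun v => ?_
    refine ContinuousLinearMap.opNorm_le_bound _ (by positivity) fun w => ?_
    have h := (iteratedFDeriv ℝ 2 f x).le_opNorm ![v, w]
    rw [iteratedFDeriv_two_apply] at h
    simp only [Matrix.cons_val_zero, Matrix.cons_val_one, Matrix.head_cons,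
      Fin.prod_univ_two] at h
    calc ‖fderiv ℝ (fderiv ℝ f) x v w‖
        ≤ ‖iteratedFDeriv ℝ 2 f x‖ * (‖v‖ * ‖w‖) := by
          simpa [Fin.prod_univ_two, mul_assoc] using h
      _ ≤ K₂ * (‖v‖ * ‖w‖) := by
          have : (0:ℝ) ≤ ‖v‖ * ‖w‖ := by positivity
          exact mul_le_mul_of_nonneg_right (hb2 x) this
      _ = K₂ * ‖v‖ * ‖w‖ := by ring
  -- Lipschitz bounds
  have hfL : ∀ a b : E, ‖f b - f a‖ ≤ K₁ * ‖b - a‖ := fun a b =>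
    Convex.norm_image_sub_le_of_norm_fderiv_le (fun x _ => hfd x)
      (fun x _ => hb1 x) convex_univ (Set.mem_univ a) (Set.mem_univ b)
  have hgL : ∀ a b : E, ‖g b - g a‖ ≤ G * ‖b - a‖ := fun a b =>
    Convex.norm_image_sub_le_of_norm_fderiv_le (fun x _ => hgd x)
      (fun x _ => hgb' x) convex_univ (Set.mem_univ a) (Set.mem_univ b)
  have hDfL : ∀ a b : E, ‖fderiv ℝ f b - fderiv ℝ f a‖ ≤ K₂ * ‖b - a‖ := fun a b =>
    Convex.norm_image_sub_le_of_norm_fderiv_le (fun x _ => hf'd x)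
      (fun x _ => hfd2 x) convex_univ (Set.mem_univ a) (Set.mem_univ b)
  -- Taylor remainder bound
  have hTaylor : ∀ a b : E, ‖f b - f a - fderiv ℝ f a (b - a)‖ ≤ (K₂ * ‖b - a‖) * ‖b - a‖ := by
    intro a b
    refine Convex.norm_image_sub_le_of_norm_fderiv_le' (fun x _ => hfd x) ?_
      (convex_closedBall a ‖b - a‖) (Metric.mem_closedBall_self (norm_nonneg _)) ?_
    · intro x hx
      calc ‖fderiv ℝ f x - fderiv ℝ f a‖ ≤ K₂ * ‖x - a‖ := hDfL a x
        _ ≤ K₂ * ‖b - a‖ := by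
            have : ‖x - a‖ ≤ ‖b - a‖ := by
              simpa [dist_eq_norm] using Metric.mem_closedBall.mp hx
            exact mul_le_mul_of_nonneg_left this hK₂.le
    · simp [Metric.mem_closedBall, dist_eq_norm]
  -- first Gronwall: ‖yε - y‖ ≤ ε * C₁ on [0, T]
  have hu : ∀ t ∈ Set.Icc (0:ℝ) T, ‖yε t - y t‖ ≤ ε * C₁ := by
    have key := norm_le_gronwallBound_of_norm_deriv_right_le
      (f := fun t => yε t - y t)
      (f' := fun t => (f (yε t) + ε • g (yε t)) - f (y t))
      (δ := 0) (K := K₁) (ε := ε * G) (a := 0) (b := T)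
      (fun t ht => (((hyε t ht).sub (hy t ht)).continuousAt).continuousWithinAt)
      (fun t ht => (((hyε t (Set.Ico_subset_Icc_self ht)).sub
        (hy t (Set.Ico_subset_Icc_self ht))).hasDerivWithinAt))
      (by simp [h0]) ?_
    · intro t ht
      have := key t ht
      have heq : gronwallBound 0 K₁ (ε * G) (t - 0) =
          (ε * G) / K₁ * (Real.exp (K₁ * (t - 0)) - 1) := by
        rw [gronwallBound_of_K_ne_0 hK₁.ne']; ring
      rw [heq] at this
      refine this.trans ?_
      have hle : Real.exp (K₁ * (t - 0)) - 1 ≤ Real.exp (K₁ * T) - 1 := by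
        have : K₁ * (t - 0) ≤ K₁ * T := by
          have := ht.2; nlinarith [ht.1]
        linarith [Real.exp_le_exp.mpr this]
      calc (ε * G) / K₁ * (Real.exp (K₁ * (t - 0)) - 1)
          ≤ (ε * G) / K₁ * (Real.exp (K₁ * T) - 1) := by
            apply mul_le_mul_of_nonneg_left hle; positivity
        _ = ε * C₁ := by rw [hC₁def]; ring
    · intro t ht
      have ht' : t ∈ Set.Icc (0:ℝ) T := Set.Ico_subset_Icc_self ht
      have heq : (f (yε t) + ε • g (yε t)) - f (y t)
          = (f (yε t) - f (y t)) + ε • g (yε t) := by abel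
      beta_reduce
      rw [heq]
      calc ‖(f (yε t) - f (y t)) + ε • g (yε t)‖
          ≤ ‖f (yε t) - f (y t)‖ + ‖ε • g (yε t)‖ := norm_add_le _ _
        _ ≤ K₁ * ‖yε t - y t‖ + ε * G := by
            refine add_le_add (hfL _ _) ?_
            rw [norm_smul, Real.norm_eq_abs, abs_of_pos hε0]
            exact mul_le_mul_of_nonneg_left (hgb _) hε0.le
  -- second Gronwall on r = yε - y - ε φ
  have key := norm_le_gronwallBound_of_norm_deriv_right_le
    (f := fun t => yε t - y t - ε • φ t)
    (f' := fun t => (f (yε t) + ε • g (yε t)) - f (y t)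
      - ε • (fderiv ℝ f (y t) (φ t) + g (y t)))
    (δ := 0) (K := K₁) (ε := ε ^ 2 * M) (a := 0) (b := T)
    (fun t ht => ((((hyε t ht).sub (hy t ht)).sub
      ((hφ t ht).const_smul ε)).continuousAt).continuousWithinAt)
    (fun t ht => ((((hyε t (Set.Ico_subset_Icc_self ht)).sub
      (hy t (Set.Ico_subset_Icc_self ht))).sub
      ((hφ t (Set.Ico_subset_Icc_self ht)).const_smul ε)).hasDerivWithinAt))
    (by simp [h0, hφ0]) ?_
  · intro t ht
    have h' := key t ht
    have heq : gronwallBound 0 K₁ (ε ^ 2 * M) (t - 0) =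
        (ε ^ 2 * M) / K₁ * (Real.exp (K₁ * (t - 0)) - 1) := by
      rw [gronwallBound_of_K_ne_0 hK₁.ne']; ring
    rw [heq] at h'
    refine h'.trans ?_
    have hle : Real.exp (K₁ * (t - 0)) - 1 ≤ Real.exp (K₁ * T) - 1 := by
      have : K₁ * (t - 0) ≤ K₁ * T := by
        have := ht.2; nlinarith [ht.1]
      linarith [Real.exp_le_exp.mpr this]
    calc (ε ^ 2 * M) / K₁ * (Real.exp (K₁ * (t - 0)) - 1)
        ≤ (ε ^ 2 * M) / K₁ * (Real.exp (K₁ * T) - 1) := by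
          apply mul_le_mul_of_nonneg_left hle; positivity
      _ = M / K₁ * (Real.exp (K₁ * T) - 1) * ε ^ 2 := by ring
  · intro t ht
    have ht' : t ∈ Set.Icc (0:ℝ) T := Set.Ico_subset_Icc_self ht
    have hut : ‖yε t - y t‖ ≤ ε * C₁ := hu t ht'
    have hid : (f (yε t) + ε • g (yε t)) - f (y t)
        - ε • (fderiv ℝ f (y t) (φ t) + g (y t))
        = (fderiv ℝ f (y t)) (yε t - y t - ε • φ t)
          + ((f (yε t) - f (y t) - fderiv ℝ f (y t) (yε t - y t))
            + ε • (g (yε t) - g (y t))) := by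
      simp only [map_sub, map_smul, smul_add, smul_sub]
      abel
    beta_reduce
    rw [hid]
    have h1 : ‖(fderiv ℝ f (y t)) (yε t - y t - ε • φ t)‖
        ≤ K₁ * ‖yε t - y t - ε • φ t‖ := by
      calc ‖(fderiv ℝ f (y t)) (yε t - y t - ε • φ t)‖
          ≤ ‖fderiv ℝ f (y t)‖ * ‖yε t - y t - ε • φ t‖ :=
            ContinuousLinearMap.le_opNorm _ _
        _ ≤ K₁ * ‖yε t - y t - ε • φ t‖ :=
            mul_le_mul_of_nonneg_right (hb1 _) (norm_nonneg _)
    have h2 : ‖f (yε t) - f (y t) - fderiv ℝ f (y t) (yε t - y t)‖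
        ≤ K₂ * (ε * C₁) * (ε * C₁) := by
      refine (hTaylor (y t) (yε t)).trans ?_
      have hn : (0:ℝ) ≤ ‖yε t - y t‖ := norm_nonneg _
      have hsq : ‖yε t - y t‖ * ‖yε t - y t‖ ≤ (ε * C₁) * (ε * C₁) :=
        mul_le_mul hut hut hn (by positivity)
      calc K₂ * ‖yε t - y t‖ * ‖yε t - y t‖
          = K₂ * (‖yε t - y t‖ * ‖yε t - y t‖) := by ring
        _ ≤ K₂ * ((ε * C₁) * (ε * C₁)) := mul_le_mul_of_nonneg_left hsq hK₂.le
        _ = K₂ * (ε * C₁) * (ε * C₁) := by ring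
    have h3 : ‖ε • (g (yε t) - g (y t))‖ ≤ ε * (G * (ε * C₁)) := by
      rw [norm_smul, Real.norm_eq_abs, abs_of_pos hε0]
      refine mul_le_mul_of_nonneg_left ?_ hε0.le
      exact (hgL _ _).trans (mul_le_mul_of_nonneg_left hut hG.le)
    calc ‖(fderiv ℝ f (y t)) (yε t - y t - ε • φ t)
          + ((f (yε t) - f (y t) - fderiv ℝ f (y t) (yε t - y t))
            + ε • (g (yε t) - g (y t)))‖
        ≤ ‖(fderiv ℝ f (y t)) (yε t - y t - ε • φ t)‖
          + (‖f (yε t) - f (y t) - fderiv ℝ f (y t) (yε t - y t)‖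
            + ‖ε • (g (yε t) - g (y t))‖) :=
          (norm_add_le _ _).trans (by gcongr; exact norm_add_le _ _)
      _ ≤ K₁ * ‖yε t - y t - ε • φ t‖ + (K₂ * (ε * C₁) * (ε * C₁) + ε * (G * (ε * C₁))) :=
          add_le_add h1 (add_le_add h2 h3)
      _ ≤ K₁ * ‖yε t - y t - ε • φ t‖ + ε ^ 2 * M := by
          rw [hMdef]; nlinarith [hε0.le, hC₁def]
end

section
/- Let H be a Hilbert space and K a normed vector space (over ℝ or ℂ), and let T, T₁, T₂ : H → K be bounded linear operators such that T₁ and T₂ are compact. Suppose there is a constant C > 0 with ‖f‖_H ≤ C (‖T f‖_K + ‖T₁ f‖_K + ‖T₂ f‖_K) for all f ∈ H. Then there exists a constant C' > 0 such that ‖f‖_H ≤ C' ‖T f‖_K for every f in the orthogonal complement (ker T)^⊥ of the kernel of T. -/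
/-- If `T, T₁, T₂ : H → K` are bounded linear operators with `T₁, T₂` compact and
`‖f‖ ≤ C (‖Tf‖ + ‖T₁f‖ + ‖T₂f‖)` for all `f`, then there is a constant `C' > 0`
with `‖f‖ ≤ C' ‖Tf‖` for every `f` in the orthogonal complement of `ker T`. -/
theorem stmt8 {𝕜 : Type*} [RCLike 𝕜]
    {H K : Type*} [NormedAddCommGroup H] [InnerProductSpace 𝕜 H] [CompleteSpace H]
    [NormedAddCommGroup K] [NormedSpace 𝕜 K]
    (T T₁ T₂ : H →L[𝕜] K)
    (hT₁ : IsCompactOperator T₁) (hT₂ : IsCompactOperator T₂)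
    (C : ℝ) (hC : 0 < C)
    (hbound : ∀ f : H, ‖f‖ ≤ C * (‖T f‖ + ‖T₁ f‖ + ‖T₂ f‖)) :
    ∃ C' : ℝ, 0 < C' ∧ ∀ f ∈ (LinearMap.ker (T : H →ₗ[𝕜] K))ᗮ, ‖f‖ ≤ C' * ‖T f‖ := by
  by_contra hcon
  push_neg at hcon
  -- for each n, pick a unit vector v n in (ker T)ᗮ with ‖T (v n)‖ < 1/(n+1)
  have hsel : ∀ n : ℕ, ∃ v : H, v ∈ (LinearMap.ker (T : H →ₗ[𝕜] K))ᗮ ∧ ‖v‖ = 1 ∧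
      ‖T v‖ < 1 / (n + 1) := by
    intro n
    obtain ⟨f, hfmem, hf⟩ := hcon (n + 1) (by positivity)
    have hfne : f ≠ 0 := by
      rintro rfl
      simp at hf
    have hfpos : (0:ℝ) < ‖f‖ := norm_pos_iff.mpr hfne
    refine ⟨(‖f‖⁻¹ : 𝕜) • f, Submodule.smul_mem _ _ hfmem, ?_, ?_⟩
    · rw [norm_smul]
      simp [hfpos.ne']
    · rw [map_smul, norm_smul]
      simp only [norm_inv, RCLike.norm_ofReal, abs_norm]
      rw [inv_mul_lt_iff₀ hfpos, mul_one_div, lt_div_iff₀ (by positivity), mul_comm]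
      exact hf
  choose v hvmem hvnorm hvT using hsel
  -- v n lies in the closed unit ball
  have hvball : ∀ n, v n ∈ Metric.closedBall (0:H) 1 := fun n => by
    simp [hvnorm n]
  -- extract subsequences making T₁ ∘ v and T₂ ∘ v converge
  have hK₁ : IsCompact (closure <| T₁ '' Metric.closedBall 0 1) :=
    hT₁.isCompact_closure_image_closedBall (𝕜₁ := 𝕜) 1
  obtain ⟨a, -, φ₁, hφ₁, ha⟩ := hK₁.tendsto_subseq
    (x := fun n => T₁ (v n)) (fun n => subset_closure ⟨v n, hvball n, rfl⟩)
  have hK₂ : IsCompact (closure <| T₂ '' Metric.closedBall 0 1) :=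
    hT₂.isCompact_closure_image_closedBall (𝕜₁ := 𝕜) 1
  obtain ⟨b, -, φ₂, hφ₂, hb⟩ := hK₂.tendsto_subseq
    (x := fun n => T₂ (v (φ₁ n))) (fun n => subset_closure ⟨v (φ₁ n), hvball _, rfl⟩)
  set w : ℕ → H := fun n => v (φ₁ (φ₂ n)) with hw
  have hψ : StrictMono (φ₁ ∘ φ₂) := hφ₁.comp hφ₂
  -- T ∘ w tends to 0
  have hTw : Filter.Tendsto (fun n => T (w n)) Filter.atTop (nhds 0) := by
    rw [tendsto_zero_iff_norm_tendsto_zero]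
    apply squeeze_zero (fun n => norm_nonneg _) (fun n => (hvT _).le.trans ?_)
    · exact tendsto_one_div_add_atTop_nhds_zero_nat
    · apply div_le_div_of_nonneg_left one_pos.le (by positivity)
      have h := hψ.id_le n
      simp only [Function.comp_apply, id_eq] at h
      have h' : ((n:ℝ)) ≤ φ₁ (φ₂ n) := by exact_mod_cast h
      linarith
  -- T₁ ∘ w and T₂ ∘ w converge
  have hT₁w : Filter.Tendsto (fun n => T₁ (w n)) Filter.atTop (nhds a) :=
    ha.comp hφ₂.tendsto_atTop
  have hT₂w : Filter.Tendsto (fun n => T₂ (w n)) Filter.atTop (nhds b) := hb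
  -- w is Cauchy
  have hcauchy : CauchySeq w := by
    rw [Metric.cauchySeq_iff]
    intro ε hε
    have h3 : (0:ℝ) < ε / (3 * C) := by positivity
    obtain ⟨N₀, hN₀⟩ := (Metric.cauchySeq_iff.mp hTw.cauchySeq) _ h3
    obtain ⟨N₁, hN₁⟩ := (Metric.cauchySeq_iff.mp hT₁w.cauchySeq) _ h3
    obtain ⟨N₂, hN₂⟩ := (Metric.cauchySeq_iff.mp hT₂w.cauchySeq) _ h3
    refine ⟨max N₀ (max N₁ N₂), fun m hm n hn => ?_⟩
    have h0 := hN₀ m (le_of_max_le_left hm) n (le_of_max_le_left hn)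
    have h1 := hN₁ m (le_of_max_le_left (le_of_max_le_right hm))
      n (le_of_max_le_left (le_of_max_le_right hn))
    have h2 := hN₂ m (le_of_max_le_right (le_of_max_le_right hm))
      n (le_of_max_le_right (le_of_max_le_right hn))
    rw [dist_eq_norm] at h0 h1 h2 ⊢
    calc ‖w m - w n‖ ≤ C * (‖T (w m - w n)‖ + ‖T₁ (w m - w n)‖ + ‖T₂ (w m - w n)‖) :=
          hbound _
      _ = C * (‖T (w m) - T (w n)‖ + ‖T₁ (w m) - T₁ (w n)‖ + ‖T₂ (w m) - T₂ (w n)‖) := by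
          simp [map_sub]
      _ < C * (ε / (3 * C) + ε / (3 * C) + ε / (3 * C)) := by
          apply mul_lt_mul_of_pos_left _ hC
          gcongr
      _ = ε := by field_simp; ring
  obtain ⟨f, hf⟩ := cauchySeq_tendsto_of_complete hcauchy
  -- f is a unit vector
  have hfnorm : ‖f‖ = 1 := by
    have : Filter.Tendsto (fun n => ‖w n‖) Filter.atTop (nhds ‖f‖) :=
      (continuous_norm.tendsto f).comp hf
    have h1 : Filter.Tendsto (fun _ : ℕ => (1:ℝ)) Filter.atTop (nhds ‖f‖) := by
      simpa [hw, hvnorm] using this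
    exact tendsto_nhds_unique h1 tendsto_const_nhds
  -- f ∈ (ker T)ᗮ since that submodule is closed
  have hfmem : f ∈ (LinearMap.ker (T : H →ₗ[𝕜] K))ᗮ :=
    (Submodule.isClosed_orthogonal _).mem_of_tendsto hf
      (Filter.Eventually.of_forall fun n => hvmem _)
  -- T f = 0
  have hTf : T f = 0 := by
    have : Filter.Tendsto (fun n => T (w n)) Filter.atTop (nhds (T f)) :=
      (T.continuous.tendsto f).comp hf
    exact tendsto_nhds_unique this hTw
  -- contradiction: f ∈ ker T ∩ (ker T)ᗮ but ‖f‖ = 1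
  have : f = 0 := by
    have := Submodule.inner_right_of_mem_orthogonal (K := LinearMap.ker (T : H →ₗ[𝕜] K))
      (LinearMap.mem_ker.mpr hTf) hfmem
    simpa [inner_self_eq_zero] using this
  rw [this] at hfnorm
  simp at hfnorm
end

section
/- Let n ≥ 1, T > 0, and let B, C, D : [0, T] → Mat_{n×n}(ℝ) be continuous with C(t) and D(t) symmetric for every t. Suppose M : [0, T] → Mat_{n×n}(ℂ) is differentiable and satisfies the matrix Riccati equation M'(t) = −B(t)ᵀ M(t) − M(t) B(t) − M(t) C(t) M(t) − D(t) with M(0) = i·Id. Then for every t ∈ [0, T], M(t) is symmetric (M(t)ᵀ = M(t)) and the imaginary part Im M(t) is positive definite. -/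
open Matrix

section MatAux
variable {n : ℕ} {α : Type*} [NormedField α] [NormedSpace ℝ α]

attribute [local instance] Matrix.linftyOpNormedAddCommGroup Matrix.linftyOpNormedSpace

lemma mat_entry_le (A : Matrix (Fin n) (Fin n) α) (i j : Fin n) : ‖A i j‖ ≤ ‖A‖ := by
  have h1 : ‖A i j‖₊ ≤ ‖A‖₊ := by
    rw [Matrix.linfty_opNNNorm_def]
    exact le_trans (Finset.single_le_sum (f := fun j => ‖A i j‖₊) (fun _ _ => zero_le)
      (Finset.mem_univ j)) (Finset.le_sup (f := fun i => ∑ j, ‖A i j‖₊) (Finset.mem_univ i))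
  exact_mod_cast h1

lemma mat_norm_le_sum (A : Matrix (Fin n) (Fin n) α) : ‖A‖ ≤ ∑ i, ∑ j, ‖A i j‖ := by
  have h1 : ‖A‖₊ ≤ ∑ i, ∑ j, ‖A i j‖₊ := by
    rw [Matrix.linfty_opNNNorm_def]
    exact Finset.sup_le fun i _ => Finset.single_le_sum
      (f := fun i => ∑ j, ‖A i j‖₊) (fun _ _ => zero_le) (Finset.mem_univ i)
  have := (NNReal.coe_le_coe).2 h1
  push_cast at this
  exact this

lemma hasDerivAt_of_entries {f : ℝ → Matrix (Fin n) (Fin n) α} {fd : Matrix (Fin n) (Fin n) α}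
    {t : ℝ} (h : ∀ i j, HasDerivAt (fun s => f s i j) (fd i j) t) :
    HasDerivAt f fd t := by
  refine hasDerivAt_iff_isLittleO.2 ?_
  rw [Asymptotics.isLittleO_iff]
  intro c hc
  have hc' : 0 < c / ((n : ℝ) ^ 2 + 1) := by positivity
  have He : ∀ i j, ∀ᶠ s in nhds t,
      ‖f s i j - f t i j - (s - t) • fd i j‖ ≤ c / ((n : ℝ) ^ 2 + 1) * ‖s - t‖ := by
    intro i j
    have := (hasDerivAt_iff_isLittleO.1 (h i j))
    exact Asymptotics.isLittleO_iff.1 this hc'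
  have Hall : ∀ᶠ s in nhds t, ∀ i j,
      ‖f s i j - f t i j - (s - t) • fd i j‖ ≤ c / ((n : ℝ) ^ 2 + 1) * ‖s - t‖ := by
    rw [Filter.eventually_all]; intro i; rw [Filter.eventually_all]; exact fun j => He i j
  filter_upwards [Hall] with s hs
  calc ‖f s - f t - (s - t) • fd‖ ≤ ∑ i, ∑ j, ‖(f s - f t - (s - t) • fd) i j‖ :=
        mat_norm_le_sum _
    _ ≤ ∑ _i : Fin n, ∑ _j : Fin n, c / ((n : ℝ) ^ 2 + 1) * ‖s - t‖ := by
        apply Finset.sum_le_sum; intro i _; apply Finset.sum_le_sum; intro j _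
        simpa [Matrix.sub_apply, Matrix.smul_apply] using hs i j
    _ ≤ c * ‖s - t‖ := by
        rw [Finset.sum_const, Finset.sum_const]
        simp only [Finset.card_univ, Fintype.card_fin, nsmul_eq_mul]
        have hX : (0:ℝ) < (n : ℝ) ^ 2 + 1 := by positivity
        calc (n : ℝ) * ((n : ℝ) * (c / ((n : ℝ) ^ 2 + 1) * ‖s - t‖))
            = ((n : ℝ) * (n : ℝ) * c / ((n : ℝ) ^ 2 + 1)) * ‖s - t‖ := by ring
          _ ≤ c * ‖s - t‖ := by
              apply mul_le_mul_of_nonneg_right _ (norm_nonneg _)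
              rw [div_le_iff₀ hX]
              nlinarith [hc.le]

lemma entry_hasDerivAt {f : ℝ → Matrix (Fin n) (Fin n) α} {fd : Matrix (Fin n) (Fin n) α}
    {t : ℝ} (h : HasDerivAt f fd t) (i j : Fin n) :
    HasDerivAt (fun s => f s i j) (fd i j) t := by
  replace h := hasDerivAt_iff_isLittleO.1 h
  rw [hasDerivAt_iff_isLittleO]
  rw [Asymptotics.isLittleO_iff] at h ⊢
  intro c hc
  filter_upwards [h hc] with s hs
  calc ‖f s i j - f t i j - (s - t) • fd i j‖ = ‖(f s - f t - (s - t) • fd) i j‖ := by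
        simp [Matrix.sub_apply, Matrix.smul_apply]
    _ ≤ ‖f s - f t - (s - t) • fd‖ := mat_entry_le _ _ _
    _ ≤ c * ‖s - t‖ := hs

lemma continuousOn_matrix_of_entries {f : ℝ → Matrix (Fin n) (Fin n) α} {s : Set ℝ}
    (h : ∀ i j, ContinuousOn (fun t => f t i j) s) : ContinuousOn f s := by
  intro t ht
  rw [ContinuousWithinAt]; refine tendsto_iff_norm_sub_tendsto_zero.2 ?_
  have hsum : Filter.Tendsto (fun x => ∑ i, ∑ j, ‖f x i j - f t i j‖)
      (nhdsWithin t s) (nhds 0) := by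
    have h0 : (0:ℝ) = ∑ _i : Fin n, ∑ _j : Fin n, (0:ℝ) := by simp
    rw [h0]
    apply tendsto_finset_sum; intro i _
    apply tendsto_finset_sum; intro j _
    have h1 := h i j t ht
    rw [ContinuousWithinAt, tendsto_iff_norm_sub_tendsto_zero] at h1
    exact h1
  apply squeeze_zero (fun x => norm_nonneg _) (fun x => ?_) hsum
  calc ‖f x - f t‖ ≤ ∑ i, ∑ j, ‖(f x - f t) i j‖ := mat_norm_le_sum _
    _ = ∑ i, ∑ j, ‖f x i j - f t i j‖ := by simp [Matrix.sub_apply]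

end MatAux

section SymAux
variable {n : ℕ}

lemma sym_identity (Bc Cc Dc N : Matrix (Fin n) (Fin n) ℂ) (hC : Ccᵀ = Cc) (hD : Dcᵀ = Dc) :
    (-Bcᵀ * N - N * Bc - N * Cc * N - Dc)ᵀ - (-Bcᵀ * N - N * Bc - N * Cc * N - Dc)
      = -Bcᵀ * (Nᵀ - N) - (Nᵀ - N) * Bc - N * Cc * (Nᵀ - N) - (Nᵀ - N) * Cc * Nᵀ := by
  simp only [Matrix.transpose_sub, Matrix.transpose_neg, Matrix.transpose_mul,
    Matrix.transpose_transpose, hC, hD]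
  noncomm_ring

end SymAux

section CpxAux
variable {n : ℕ}



lemma mapim_real_mul (P : Matrix (Fin n) (Fin n) ℝ) (Z : Matrix (Fin n) (Fin n) ℂ) :
    ((P.map (fun r => (r : ℂ))) * Z).map Complex.im = P * Z.map Complex.im := by
  ext i j
  simp [Matrix.mul_apply, Matrix.map_apply, Complex.im_sum, Complex.im_ofReal_mul]

lemma mapim_mul_real (Z : Matrix (Fin n) (Fin n) ℂ) (P : Matrix (Fin n) (Fin n) ℝ) :
    (Z * P.map (fun r => (r : ℂ))).map Complex.im = Z.map Complex.im * P := by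
  ext i j
  simp [Matrix.mul_apply, Matrix.map_apply, Complex.im_sum, Complex.mul_im]

lemma mapre_mul_real (Z : Matrix (Fin n) (Fin n) ℂ) (P : Matrix (Fin n) (Fin n) ℝ) :
    (Z * P.map (fun r => (r : ℂ))).map Complex.re = Z.map Complex.re * P := by
  ext i j
  simp [Matrix.mul_apply, Matrix.map_apply, Complex.re_sum, Complex.mul_re]

lemma mapim_mul (Y Z : Matrix (Fin n) (Fin n) ℂ) :
    (Y * Z).map Complex.im
      = Y.map Complex.re * Z.map Complex.im + Y.map Complex.im * Z.map Complex.re := by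
  ext i j
  simp [Matrix.mul_apply, Matrix.map_apply, Complex.im_sum, Complex.mul_im,
    Finset.sum_add_distrib]

lemma mapim_sub (Y Z : Matrix (Fin n) (Fin n) ℂ) :
    (Y - Z).map Complex.im = Y.map Complex.im - Z.map Complex.im := by
  ext i j; simp [Matrix.sub_apply]

lemma mapim_neg (Y : Matrix (Fin n) (Fin n) ℂ) :
    (-Y).map Complex.im = -(Y.map Complex.im) := by
  ext i j; simp

lemma mapim_real (P : Matrix (Fin n) (Fin n) ℝ) :
    (P.map (fun r => (r : ℂ))).map Complex.im = 0 := by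
  ext i j; simp

/-- The key algebraic identity for the derivative of the imaginary part. -/
lemma im_deriv_identity (Br Cr Dr : Matrix (Fin n) (Fin n) ℝ) (M : Matrix (Fin n) (Fin n) ℂ)
    (hC : Crᵀ = Cr) (hMs : Mᵀ = M) :
    ((- (Br.map (fun r => (r : ℂ)))ᵀ * M
          - M * Br.map (fun r => (r : ℂ))
          - M * Cr.map (fun r => (r : ℂ)) * M
          - Dr.map (fun r => (r : ℂ))).map Complex.im)
      = -(Br + Cr * M.map Complex.re)ᵀ * M.map Complex.im
          - M.map Complex.im * (Br + Cr * M.map Complex.re) := by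
  have hXs : (M.map Complex.re)ᵀ = M.map Complex.re := by
    rw [← Matrix.transpose_map]; rw [hMs]
  have h1 : (- (Br.map (fun r => (r : ℂ)))ᵀ * M
          - M * Br.map (fun r => (r : ℂ))
          - M * Cr.map (fun r => (r : ℂ)) * M
          - Dr.map (fun r => (r : ℂ)))
      = (-(Brᵀ.map (fun r => (r : ℂ)))) * M
          - M * Br.map (fun r => (r : ℂ))
          - (M * Cr.map (fun r => (r : ℂ))) * M
          - Dr.map (fun r => (r : ℂ)) := by
    rw [Matrix.transpose_map]
  rw [h1]
  rw [mapim_sub, mapim_sub, mapim_sub, mapim_real, Matrix.neg_mul, mapim_neg,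
    mapim_real_mul, mapim_mul_real, mapim_mul (M * Cr.map (fun r => (r : ℂ))) M,
    mapre_mul_real, mapim_mul_real]
  rw [Matrix.transpose_add, Matrix.transpose_mul, hXs, hC]
  -- now a real-matrix ring identity
  set X := M.map Complex.re
  set W := M.map Complex.im
  noncomm_ring

section PosAux
variable {n : ℕ}

lemma dot_symm (W : Matrix (Fin n) (Fin n) ℝ) (hW : Wᵀ = W) (u v : Fin n → ℝ) :
    u ⬝ᵥ (W *ᵥ v) = v ⬝ᵥ (W *ᵥ u) := by
  rw [Matrix.dotProduct_mulVec]
  have : u ᵥ* W = W *ᵥ u := by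
    conv_lhs => rw [← hW]
    exact Matrix.vecMul_transpose W u
  rw [this, dotProduct_comm]

lemma posdef_diag_pos {V : Matrix (Fin n) (Fin n) ℝ} (h : V.PosDef) (i : Fin n) :
    0 < V i i := by
  have := h.dotProduct_mulVec_pos (x := Pi.single i 1) (by
    intro hx
    have := congrFun hx i
    simp at this)
  simpa [Matrix.mulVec_single, single_dotProduct] using this

lemma posdef_entry_sq {V : Matrix (Fin n) (Fin n) ℝ} (h : V.PosDef) (i j : Fin n) :
    (V i j)^2 ≤ V i i * V j j := by
  rcases eq_or_ne i j with rfl | hij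
  · rw [sq]
  have hVs : Vᵀ = V := h.1
  have hsym : V j i = V i j := by
    have := congrFun (congrFun hVs i) j
    simpa [Matrix.transpose_apply] using this
  have hii := posdef_diag_pos h i
  set a : ℝ := -(V i j) with ha
  set b : ℝ := V i i with hb
  set x : Fin n → ℝ := a • (Pi.single i 1 : Fin n → ℝ) + b • (Pi.single j 1 : Fin n → ℝ)
    with hx
  have hxj : x j = b := by
    simp [hx, Pi.single_apply, Ne.symm hij]
  have hxne : x ≠ 0 := by
    intro h0
    rw [h0] at hxj
    exact hii.ne (by simpa using hxj)
  have hq := h.dotProduct_mulVec_pos hxne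
  have hexp : star x ⬝ᵥ (V *ᵥ x)
      = a * a * V i i + a * b * V i j + b * a * V j i + b * b * V j j := by
    simp only [star_trivial, hx, Matrix.mulVec_add, Matrix.mulVec_smul,
      add_dotProduct, smul_dotProduct, dotProduct_add,
      dotProduct_smul, Matrix.mulVec_single, single_dotProduct]
    simp only [smul_eq_mul, mul_one, one_mul, Matrix.col_apply, MulOpposite.op_one, one_smul]
    ring
  rw [hexp, hsym] at hq
  simp only [ha, hb] at hq
  nlinarith [hq, hii]

lemma posdef_entry_le_trace {V : Matrix (Fin n) (Fin n) ℝ} (h : V.PosDef) (i j : Fin n) :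
    |V i j| ≤ ∑ k, V k k := by
  have h1 := posdef_entry_sq h i j
  have hii := posdef_diag_pos h i
  have hjj := posdef_diag_pos h j
  have htr : ∀ k, V k k ≤ ∑ k, V k k := fun k =>
    Finset.single_le_sum (f := fun k => V k k) (fun k _ => (posdef_diag_pos h k).le)
      (Finset.mem_univ k)
  have hS : 0 < ∑ k, V k k := lt_of_lt_of_le hii (htr i)
  nlinarith [h1, htr i, htr j, abs_nonneg (V i j), sq_abs (V i j), hS]

lemma real_isHermitian_of_transpose {V : Matrix (Fin n) (Fin n) ℝ} (h : Vᵀ = V) :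
    V.IsHermitian := by
  ext i j
  have := congrFun (congrFun h i) j
  simpa [Matrix.conjTranspose_apply] using this

lemma sum_sq_pos_of_ne_zero {v : Fin n → ℝ} (h : v ≠ 0) : 0 < ∑ i, v i ^ 2 := by
  have ⟨i, hi⟩ : ∃ i, v i ≠ 0 := Function.ne_iff.1 h
  apply Finset.sum_pos' (fun j _ => sq_nonneg _)
  exact ⟨i, Finset.mem_univ i, pow_two_pos_of_ne_zero hi⟩

lemma posdef_of_quad {V : Matrix (Fin n) (Fin n) ℝ} (hsym : Vᵀ = V)
    (h : ∀ v : Fin n → ℝ, v ≠ 0 → 0 < v ⬝ᵥ (V *ᵥ v)) : V.PosDef := by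
  refine Matrix.PosDef.of_dotProduct_mulVec_pos (real_isHermitian_of_transpose hsym) fun v hv => ?_
  simpa using h v hv

lemma quad_abs_bound (Δ : Matrix (Fin n) (Fin n) ℝ) (v : Fin n → ℝ) {ε : ℝ} (hε : 0 ≤ ε)
    (hDel : ∀ i j, |Δ i j| ≤ ε) :
    |v ⬝ᵥ (Δ *ᵥ v)| ≤ ε * ((n:ℝ) * ∑ i, v i ^ 2) := by
  have s1 : |v ⬝ᵥ (Δ *ᵥ v)| ≤ ∑ i, ∑ j, (ε * (|v i| * |v j|)) := by
    calc |v ⬝ᵥ (Δ *ᵥ v)| = |∑ i, v i * ∑ j, Δ i j * v j| := by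
          simp [dotProduct, Matrix.mulVec]
      _ ≤ ∑ i, |v i * ∑ j, Δ i j * v j| := Finset.abs_sum_le_sum_abs _ _
      _ ≤ ∑ i, ∑ j, (ε * (|v i| * |v j|)) := by
          apply Finset.sum_le_sum; intro i _
          rw [abs_mul]
          calc |v i| * |∑ j, Δ i j * v j| ≤ |v i| * ∑ j, (ε * |v j|) := by
                apply mul_le_mul_of_nonneg_left _ (abs_nonneg _)
                calc |∑ j, Δ i j * v j| ≤ ∑ j, |Δ i j * v j| := Finset.abs_sum_le_sum_abs _ _
                  _ ≤ ∑ j, (ε * |v j|) := by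
                      apply Finset.sum_le_sum; intro j _
                      rw [abs_mul]
                      exact mul_le_mul_of_nonneg_right (hDel i j) (abs_nonneg _)
            _ = ∑ j, (ε * (|v i| * |v j|)) := by
                rw [Finset.mul_sum]; apply Finset.sum_congr rfl; intro j _; ring
  have s3 : ∑ i, ∑ j, (ε * (|v i| * |v j|)) = ε * (∑ i, |v i|)^2 := by
    rw [sq, Finset.sum_mul_sum, Finset.mul_sum]
    apply Finset.sum_congr rfl; intro i _
    rw [Finset.mul_sum]
  have s4 : (∑ i, |v i|)^2 ≤ (n:ℝ) * ∑ i, v i ^ 2 := by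
    have := sq_sum_le_card_mul_sum_sq (s := Finset.univ) (f := fun i : Fin n => |v i|)
    simpa [sq_abs, Finset.card_univ] using this
  calc |v ⬝ᵥ (Δ *ᵥ v)| ≤ ∑ i, ∑ j, (ε * (|v i| * |v j|)) := s1
    _ = ε * (∑ i, |v i|)^2 := s3
    _ ≤ ε * ((n:ℝ) * ∑ i, v i ^ 2) := mul_le_mul_of_nonneg_left s4 hε

lemma realHermitian_transpose {V : Matrix (Fin n) (Fin n) ℝ} (h : V.IsHermitian) :
    Vᵀ = V := by
  ext i j
  have := congrFun (congrFun h j) i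
  simpa [Matrix.conjTranspose_apply] using this.symm

end PosAux
section KeyAux
variable {n : ℕ}

attribute [local instance] Matrix.linftyOpNormedAddCommGroup Matrix.linftyOpNormedSpace
  Matrix.linftyOpNormedRing Matrix.linftyOpNormedAlgebra

lemma inverse_hasDerivAt (W : ℝ → Matrix (Fin n) (Fin n) ℝ)
    (Wd : Matrix (Fin n) (Fin n) ℝ) (s : ℝ)
    (hWd : HasDerivAt W Wd s) (hu : IsUnit (W s)) :
    HasDerivAt (fun x => Ring.inverse (W x))
      (-(Ring.inverse (W s) * Wd * Ring.inverse (W s))) s := by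
  have hx : HasFDerivAt Ring.inverse
      (-ContinuousLinearMap.mulLeftRight ℝ _ (↑hu.unit⁻¹) (↑hu.unit⁻¹)) (W s) := by
    have := hasFDerivAt_ringInverse (𝕜 := ℝ) hu.unit
    rwa [hu.unit_spec] at this
  have h1 := hx.comp_hasDerivAt s hWd
  have h2 : Ring.inverse (W s) = ((hu.unit)⁻¹ : _) := by
    rw [← Ring.inverse_unit hu.unit, hu.unit_spec]
  have h3 : (-ContinuousLinearMap.mulLeftRight ℝ _ (↑hu.unit⁻¹) (↑hu.unit⁻¹)) Wd
      = -(Ring.inverse (W s) * Wd * Ring.inverse (W s)) := by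
    simp only [ContinuousLinearMap.neg_apply, ContinuousLinearMap.mulLeftRight_apply, h2]
  rw [← h3]
  exact h1

lemma key_bound (hn : 1 ≤ n) {T c : ℝ} (hT : 0 < T) (hc : 0 ≤ c)
    (W A : ℝ → Matrix (Fin n) (Fin n) ℝ)
    (hWd : ∀ t ∈ Set.Icc (0:ℝ) T, HasDerivAt W (-(A t)ᵀ * W t - W t * A t) t)
    (hAb : ∀ t ∈ Set.Icc (0:ℝ) T, ∀ i j, |A t i j| ≤ c)
    (hW0 : W 0 = 1)
    {τ : ℝ} (hτ : τ ∈ Set.Icc (0:ℝ) T)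
    (hpos : ∀ s ∈ Set.Icc (0:ℝ) τ, (W s).PosDef)
    (v : Fin n → ℝ) :
    (∑ i, v i ^ 2) / ((n : ℝ) * ((n : ℝ) * Real.exp (2 * c * (n:ℝ)^2 * T)))
      ≤ v ⬝ᵥ (W τ *ᵥ v) := by
  set K : ℝ := 2 * c * (n:ℝ)^2 with hK
  have hKnn : 0 ≤ K := by positivity
  set G : ℝ := (n : ℝ) * Real.exp (K * T) with hG
  have hnpos : (0:ℝ) < n := by exact_mod_cast hn
  have hGpos : 0 < G := by positivity
  have hsub : Set.Icc (0:ℝ) τ ⊆ Set.Icc (0:ℝ) T :=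
    Set.Icc_subset_Icc le_rfl hτ.2
  have hu : ∀ s ∈ Set.Icc (0:ℝ) τ, IsUnit (W s) := fun s hs =>
    (Matrix.isUnit_iff_isUnit_det _).2 (isUnit_iff_ne_zero.2 (hpos s hs).det_pos.ne')
  set V : ℝ → Matrix (Fin n) (Fin n) ℝ := fun s => Ring.inverse (W s) with hV
  have hVpos : ∀ s ∈ Set.Icc (0:ℝ) τ, (V s).PosDef := by
    intro s hs
    have : V s = (W s)⁻¹ := (Matrix.nonsing_inv_eq_ringInverse (W s)).symm
    rw [this]
    exact (hpos s hs).inv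
  have hWV : ∀ s ∈ Set.Icc (0:ℝ) τ, W s * V s = 1 :=
    fun s hs => Ring.mul_inverse_cancel _ (hu s hs)
  have hVW : ∀ s ∈ Set.Icc (0:ℝ) τ, V s * W s = 1 :=
    fun s hs => Ring.inverse_mul_cancel _ (hu s hs)
  have hVd : ∀ s ∈ Set.Icc (0:ℝ) τ, HasDerivAt V (V s * (A s)ᵀ + A s * V s) s := by
    intro s hs
    have h1 := inverse_hasDerivAt W _ s (hWd s (hsub hs)) (hu s hs)
    convert h1 using 1
    have expand : -(V s * (-(A s)ᵀ * W s - W s * A s) * V s)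
        = V s * (A s)ᵀ * (W s * V s) + (V s * W s) * (A s * V s) := by
      noncomm_ring
    rw [expand, hWV s hs, hVW s hs, mul_one, one_mul]
  set g : ℝ → ℝ := fun s => ∑ i, V s i i with hg
  have hgd : ∀ s ∈ Set.Icc (0:ℝ) τ,
      HasDerivAt g (∑ i, (V s * (A s)ᵀ + A s * V s) i i) s := by
    intro s hs
    exact HasDerivAt.fun_sum fun i _ => entry_hasDerivAt (hVd s hs) i i
  have hgpos : ∀ s ∈ Set.Icc (0:ℝ) τ, 0 < g s := by
    intro s hs
    apply Finset.sum_pos (fun i _ => posdef_diag_pos (hVpos s hs) i)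
    haveI : Nonempty (Fin n) := ⟨⟨0, by omega⟩⟩
    exact Finset.univ_nonempty
  have hderiv_le : ∀ s ∈ Set.Icc (0:ℝ) τ,
      (∑ i, (V s * (A s)ᵀ + A s * V s) i i) ≤ K * g s := by
    intro s hs
    have hVint : ∀ i j, |V s i j| ≤ g s := fun i j => posdef_entry_le_trace (hVpos s hs) i j
    have hAint : ∀ i j, |A s i j| ≤ c := hAb s (hsub hs)
    have hterm : ∀ i : Fin n, (V s * (A s)ᵀ + A s * V s) i i ≤ 2 * c * (n:ℝ) * g s := by
      intro i
      have e1 : (V s * (A s)ᵀ) i i = ∑ j, V s i j * A s i j := by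
        simp [Matrix.mul_apply, Matrix.transpose_apply]
      have e2 : (A s * V s) i i = ∑ j, A s i j * V s j i := by
        simp [Matrix.mul_apply]
      rw [Matrix.add_apply, e1, e2]
      have b1 : ∑ j, V s i j * A s i j ≤ c * (n:ℝ) * g s := by
        calc ∑ j, V s i j * A s i j ≤ ∑ j : Fin n, c * g s := by
              apply Finset.sum_le_sum; intro j _
              calc V s i j * A s i j ≤ |V s i j * A s i j| := le_abs_self _
                _ = |V s i j| * |A s i j| := abs_mul _ _
                _ ≤ g s * c := by
                    apply mul_le_mul (hVint i j) (hAint i j) (abs_nonneg _)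
                    exact (abs_nonneg _).trans (hVint i j)
                _ = c * g s := mul_comm _ _
          _ = c * (n:ℝ) * g s := by
              rw [Finset.sum_const, Finset.card_univ, Fintype.card_fin, nsmul_eq_mul]; ring
      have b2 : ∑ j, A s i j * V s j i ≤ c * (n:ℝ) * g s := by
        calc ∑ j, A s i j * V s j i ≤ ∑ j : Fin n, c * g s := by
              apply Finset.sum_le_sum; intro j _
              calc A s i j * V s j i ≤ |A s i j * V s j i| := le_abs_self _
                _ = |A s i j| * |V s j i| := abs_mul _ _
                _ ≤ c * g s := by
                    apply mul_le_mul (hAint i j) (hVint j i) (abs_nonneg _) hc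
          _ = c * (n:ℝ) * g s := by
              rw [Finset.sum_const, Finset.card_univ, Fintype.card_fin, nsmul_eq_mul]; ring
      linarith
    calc ∑ i, (V s * (A s)ᵀ + A s * V s) i i ≤ ∑ i : Fin n, 2 * c * (n:ℝ) * g s :=
          Finset.sum_le_sum fun i _ => hterm i
      _ = K * g s := by
          rw [Finset.sum_const, Finset.card_univ, Fintype.card_fin, nsmul_eq_mul, hK]; ring
  -- g s ≤ G on Icc 0 τ
  have hgG : ∀ s ∈ Set.Icc (0:ℝ) τ, g s ≤ G := by
    intro s hs
    set h : ℝ → ℝ := fun s => g s * Real.exp (-K * s) with hh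
    have hhd : ∀ x ∈ Set.Icc (0:ℝ) τ, HasDerivAt h
        ((∑ i, (V x * (A x)ᵀ + A x * V x) i i) * Real.exp (-K * x)
          + g x * (Real.exp (-K * x) * -K)) x := by
      intro x hx
      have he : HasDerivAt (fun y => Real.exp (-K * y)) (Real.exp (-K * x) * -K) x := by
        have : HasDerivAt (fun y : ℝ => -K * y) (-K) x := by
          simpa using (hasDerivAt_id x).const_mul (-K)
        exact this.exp
      exact (hgd x hx).mul he
    have hanti : AntitoneOn h (Set.Icc (0:ℝ) τ) := by
      apply antitoneOn_of_deriv_nonpos (convex_Icc _ _)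
      · intro x hx
        exact ((hhd x hx).continuousAt).continuousWithinAt
      · intro x hx
        rw [interior_Icc] at hx
        exact ((hhd x (Set.Ioo_subset_Icc_self hx)).differentiableAt).differentiableWithinAt
      · intro x hx
        rw [interior_Icc] at hx
        have hx' := Set.Ioo_subset_Icc_self hx
        rw [(hhd x hx').deriv]
        have h1 := hderiv_le x hx'
        have h2 := hgpos x hx'
        have he : 0 < Real.exp (-K * x) := Real.exp_pos _
        nlinarith
    have h0 : (0:ℝ) ∈ Set.Icc (0:ℝ) τ := Set.left_mem_Icc.2 hτ.1
    have hs0 := hanti h0 hs hs.1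
    have hg0 : g 0 = (n : ℝ) := by
      have hV0 : V 0 = 1 := by
        rw [hV]; simp only [hW0]; exact Ring.inverse_one _
      simp [hg, hV0, Matrix.one_apply]
    have hh0 : h 0 = (n : ℝ) := by simp [hh, hg0]
    rw [hh0] at hs0
    have he1 : Real.exp (-K * s) * Real.exp (K * s) = 1 := by
      rw [← Real.exp_add]; ring_nf; exact Real.exp_zero
    have he2 : Real.exp (K * s) ≤ Real.exp (K * T) :=
      Real.exp_le_exp.2 (mul_le_mul_of_nonneg_left ((hs.2).trans hτ.2) hKnn)
    have hepos : 0 < Real.exp (K * s) := Real.exp_pos _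
    have : g s = h s * Real.exp (K * s) := by
      rw [hh]; simp only []; rw [mul_assoc, he1, mul_one]
    rw [this, hG]
    calc h s * Real.exp (K * s) ≤ (n:ℝ) * Real.exp (K * s) :=
          mul_le_mul_of_nonneg_right hs0 hepos.le
      _ ≤ (n:ℝ) * Real.exp (K * T) := by
          apply mul_le_mul_of_nonneg_left he2 hnpos.le
  -- Cauchy–Schwarz step at τ
  have hτmem : τ ∈ Set.Icc (0:ℝ) τ := Set.right_mem_Icc.2 hτ.1
  have hWsym : (W τ)ᵀ = W τ := realHermitian_transpose (hpos τ hτmem).1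
  set u : Fin n → ℝ := V τ *ᵥ v with hu'
  have hWu : W τ *ᵥ u = v := by
    rw [hu', Matrix.mulVec_mulVec, hWV τ hτmem, Matrix.one_mulVec]
  set a : ℝ := v ⬝ᵥ (W τ *ᵥ v) with ha
  set b : ℝ := u ⬝ᵥ v with hb
  set S2 : ℝ := ∑ i, v i ^ 2 with hS2
  have hvvS : v ⬝ᵥ v = S2 := by
    simp [dotProduct, hS2, sq]
  have hquad : ∀ x : ℝ, 0 ≤ a * (x * x) + (2 * S2) * x + b := by
    intro x
    have hq := (hpos τ hτmem).posSemidef.dotProduct_mulVec_nonneg (x • v + u)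
    have hexp : star (x • v + u) ⬝ᵥ (W τ *ᵥ (x • v + u))
        = a * (x * x) + (2 * S2) * x + b := by
      simp only [star_trivial, Matrix.mulVec_add, Matrix.mulVec_smul,
        add_dotProduct, smul_dotProduct, dotProduct_add,
        dotProduct_smul, smul_eq_mul]
      have h1 : v ⬝ᵥ (W τ *ᵥ u) = S2 := by rw [hWu, hvvS]
      have h2 : u ⬝ᵥ (W τ *ᵥ v) = S2 := by
        rw [dot_symm (W τ) hWsym u v, hWu, hvvS]
      have h3 : u ⬝ᵥ (W τ *ᵥ u) = b := by
        rw [dot_symm (W τ) hWsym u u]  -- no-op; just keep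
        rw [hWu, hb]
      rw [h1, h2, h3, ← ha]
      ring
    rw [hexp] at hq
    exact hq
  have hdisc := discrim_le_zero hquad
  rw [discrim] at hdisc
  have hanonneg : 0 ≤ a := by
    have hq := (hpos τ hτmem).posSemidef.dotProduct_mulVec_nonneg v
    simpa [ha] using hq
  have hbB : b ≤ G * ((n:ℝ) * S2) := by
    have hgτ := hgG τ hτmem
    have hVint : ∀ i j, |V τ i j| ≤ g τ := fun i j =>
      posdef_entry_le_trace (hVpos τ hτmem) i j
    have s1 : b = ∑ i, (∑ j, V τ i j * v j) * v i := by
      simp [hb, hu', dotProduct, Matrix.mulVec]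
    have s2 : b ≤ ∑ i, ∑ j, (g τ * (|v i| * |v j|)) := by
      rw [s1]
      apply Finset.sum_le_sum
      intro i _
      calc (∑ j, V τ i j * v j) * v i ≤ |(∑ j, V τ i j * v j) * v i| := le_abs_self _
        _ ≤ (∑ j, |V τ i j * v j|) * |v i| := by
            rw [abs_mul]
            apply mul_le_mul_of_nonneg_right (Finset.abs_sum_le_sum_abs _ _) (abs_nonneg _)
        _ ≤ (∑ j, g τ * |v j|) * |v i| := by
            apply mul_le_mul_of_nonneg_right _ (abs_nonneg _)
            apply Finset.sum_le_sum; intro j _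
            rw [abs_mul]
            exact mul_le_mul_of_nonneg_right (hVint i j) (abs_nonneg _)
        _ = ∑ j, (g τ * (|v i| * |v j|)) := by
            rw [Finset.sum_mul]; apply Finset.sum_congr rfl; intro j _; ring
    have s3 : g τ * (∑ i, |v i|)^2 = ∑ i, ∑ j, (g τ * (|v i| * |v j|)) := by
      rw [sq, Finset.sum_mul_sum, Finset.mul_sum]
      apply Finset.sum_congr rfl; intro i _
      rw [Finset.mul_sum]
    have s4 : (∑ i, |v i|)^2 ≤ (n:ℝ) * S2 := by
      have := sq_sum_le_card_mul_sum_sq (s := Finset.univ) (f := fun i => |v i|)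
      simpa [hS2, sq_abs, Finset.card_univ] using this
    have hgτpos := hgpos τ hτmem
    have s5 : b ≤ g τ * (∑ i, |v i|)^2 := by rw [s3]; exact s2
    calc b ≤ g τ * (∑ i, |v i|)^2 := s5
      _ ≤ G * ((n:ℝ) * S2) := by nlinarith [hgτ, s4, hgτpos, sq_nonneg (∑ i, |v i|)]
  have hSnn : 0 ≤ S2 := Finset.sum_nonneg fun i _ => sq_nonneg _
  have hgoal : S2 / ((n:ℝ) * G) ≤ a := by
    rw [div_le_iff₀ (by positivity)]
    rcases eq_or_lt_of_le hSnn with h0 | hpos'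
    · rw [← h0]; positivity
    · nlinarith [hdisc, hbB, hanonneg, hpos', hGpos, hnpos]
  rw [hG] at hgoal
  rw [hK] at hgoal
  exact hgoal

end KeyAux
section Main

attribute [local instance] Matrix.linftyOpNormedAddCommGroup Matrix.linftyOpNormedSpace
  Matrix.linftyOpNormedRing Matrix.linftyOpNormedAlgebra

/-- The solution of the matrix Riccati equation
`M' = −Bᵀ M − M B − M C M − D`, `M(0) = i·Id`, along a Gaussian beam (with `B, C, D`
continuous real matrices, `C(t)`, `D(t)` symmetric) remains symmetric and has
positive definite imaginary part on `[0, T]`. -/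
theorem stmt11 (n : ℕ) (hn : 1 ≤ n) (T : ℝ) (hT : 0 < T)
    (B C D : ℝ → Matrix (Fin n) (Fin n) ℝ)
    (hB : ∀ i j, ContinuousOn (fun t => B t i j) (Set.Icc 0 T))
    (hC : ∀ i j, ContinuousOn (fun t => C t i j) (Set.Icc 0 T))
    (hD : ∀ i j, ContinuousOn (fun t => D t i j) (Set.Icc 0 T))
    (hCsymm : ∀ t ∈ Set.Icc (0 : ℝ) T, (C t).IsSymm)
    (hDsymm : ∀ t ∈ Set.Icc (0 : ℝ) T, (D t).IsSymm)
    (M : ℝ → Matrix (Fin n) (Fin n) ℂ)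
    (hM : ∀ t ∈ Set.Icc (0 : ℝ) T, ∀ i j : Fin n,
      HasDerivAt (fun s => M s i j)
        ((- ((B t).map (fun r => (r : ℂ)))ᵀ * M t
          - M t * (B t).map (fun r => (r : ℂ))
          - M t * (C t).map (fun r => (r : ℂ)) * M t
          - (D t).map (fun r => (r : ℂ))) i j) t)
    (hM0 : M 0 = Complex.I • (1 : Matrix (Fin n) (Fin n) ℂ)) :
    ∀ t ∈ Set.Icc (0 : ℝ) T, (M t).IsSymm ∧ ((M t).map Complex.im).PosDef := by
  set Bc : ℝ → Matrix (Fin n) (Fin n) ℂ := fun t => (B t).map (fun r => (r : ℂ)) with hBcdef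
  set Cc : ℝ → Matrix (Fin n) (Fin n) ℂ := fun t => (C t).map (fun r => (r : ℂ)) with hCcdef
  set Dc : ℝ → Matrix (Fin n) (Fin n) ℂ := fun t => (D t).map (fun r => (r : ℂ)) with hDcdef
  set E : ℝ → Matrix (Fin n) (Fin n) ℂ :=
    fun t => -(Bc t)ᵀ * M t - M t * Bc t - M t * Cc t * M t - Dc t with hEdef
  have hMd : ∀ t ∈ Set.Icc (0:ℝ) T, HasDerivAt M (E t) t := fun t ht =>
    hasDerivAt_of_entries (fun i j => hM t ht i j)
  have hCct : ∀ t ∈ Set.Icc (0:ℝ) T, (Cc t)ᵀ = Cc t := by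
    intro t ht
    rw [hCcdef]
    simp only []
    rw [← Matrix.transpose_map, show (C t)ᵀ = C t from hCsymm t ht]
  have hDct : ∀ t ∈ Set.Icc (0:ℝ) T, (Dc t)ᵀ = Dc t := by
    intro t ht
    rw [hDcdef]
    simp only []
    rw [← Matrix.transpose_map, show (D t)ᵀ = D t from hDsymm t ht]
  -- continuity and bounds
  have hMcont : ContinuousOn M (Set.Icc 0 T) := fun t ht =>
    (hMd t ht).continuousAt.continuousWithinAt
  have hMTcont : ContinuousOn (fun t => (M t)ᵀ) (Set.Icc 0 T) := by
    apply continuousOn_matrix_of_entries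
    intro i j
    exact fun t ht => ((hM t ht j i).continuousAt).continuousWithinAt
  have hBccont : ContinuousOn Bc (Set.Icc 0 T) := by
    apply continuousOn_matrix_of_entries
    intro i j
    exact Complex.continuous_ofReal.comp_continuousOn (hB i j)
  have hBcTcont : ContinuousOn (fun t => (Bc t)ᵀ) (Set.Icc 0 T) := by
    apply continuousOn_matrix_of_entries
    intro i j
    exact Complex.continuous_ofReal.comp_continuousOn (hB j i)
  have hCccont : ContinuousOn Cc (Set.Icc 0 T) := by
    apply continuousOn_matrix_of_entries
    intro i j
    exact Complex.continuous_ofReal.comp_continuousOn (hC i j)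
  obtain ⟨R1, hR1⟩ := isCompact_Icc.exists_bound_of_continuousOn hBccont
  obtain ⟨R2, hR2⟩ := isCompact_Icc.exists_bound_of_continuousOn hBcTcont
  obtain ⟨R3, hR3⟩ := isCompact_Icc.exists_bound_of_continuousOn hCccont
  obtain ⟨R4, hR4⟩ := isCompact_Icc.exists_bound_of_continuousOn hMcont
  obtain ⟨R5, hR5⟩ := isCompact_Icc.exists_bound_of_continuousOn hMTcont
  set R : ℝ := max 1 (max (max R1 R2) (max R3 (max R4 R5))) with hRdef
  have hR1' : (1:ℝ) ≤ R := le_max_left _ _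
  have hRpos : (0:ℝ) < R := lt_of_lt_of_le one_pos hR1'
  have hbB' : ∀ t ∈ Set.Icc (0:ℝ) T, ‖Bc t‖ ≤ R :=
    fun t ht => (hR1 t ht).trans ((le_max_left _ _).trans ((le_max_left _ _).trans
      (le_max_right _ _)))
  have hbBT : ∀ t ∈ Set.Icc (0:ℝ) T, ‖(Bc t)ᵀ‖ ≤ R :=
    fun t ht => (hR2 t ht).trans ((le_max_right _ _).trans ((le_max_left _ _).trans
      (le_max_right _ _)))
  have hbC : ∀ t ∈ Set.Icc (0:ℝ) T, ‖Cc t‖ ≤ R :=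
    fun t ht => (hR3 t ht).trans ((le_max_left _ _).trans ((le_max_right _ _).trans
      (le_max_right _ _)))
  have hbM : ∀ t ∈ Set.Icc (0:ℝ) T, ‖M t‖ ≤ R :=
    fun t ht => (hR4 t ht).trans ((le_max_left _ _).trans ((le_max_right _ _).trans
      ((le_max_right _ _).trans (le_max_right _ _))))
  have hbMT : ∀ t ∈ Set.Icc (0:ℝ) T, ‖(M t)ᵀ‖ ≤ R :=
    fun t ht => (hR5 t ht).trans ((le_max_right _ _).trans ((le_max_right _ _).trans
      ((le_max_right _ _).trans (le_max_right _ _))))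
  -- Part 1 : symmetry on [0, T]
  have hsymm : ∀ t ∈ Set.Icc (0:ℝ) T, (M t)ᵀ = M t := by
    set clamp : ℝ → ℝ := fun t => min T (max 0 t) with hclampdef
    have hclamp_mem : ∀ t, clamp t ∈ Set.Icc (0:ℝ) T := fun t =>
      ⟨le_min hT.le (le_max_left _ _), min_le_left _ _⟩
    have hclamp_eq : ∀ t ∈ Set.Icc (0:ℝ) T, clamp t = t := by
      intro t ht
      rw [hclampdef]
      simp only []
      rw [max_eq_right ht.1, min_eq_right ht.2]
    set v : ℝ → Matrix (Fin n) (Fin n) ℂ → Matrix (Fin n) (Fin n) ℂ :=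
      fun t y => -(Bc (clamp t))ᵀ * y - y * Bc (clamp t)
        - M (clamp t) * Cc (clamp t) * y - y * Cc (clamp t) * (M (clamp t))ᵀ with hvdef
    set Kl : NNReal := (2 * R + 2 * R * R).toNNReal with hKldef
    have hKlco : (Kl : ℝ) = 2 * R + 2 * R * R := by
      rw [hKldef, Real.coe_toNNReal]
      positivity
    have hlip : ∀ t, LipschitzOnWith Kl (v t) Set.univ := by
      intro t
      apply LipschitzOnWith.of_dist_le_mul
      intro y _ z _
      rw [dist_eq_norm, dist_eq_norm]
      have hdiff : v t y - v t z
          = -((Bc (clamp t))ᵀ * (y - z)) - (y - z) * Bc (clamp t)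
            - M (clamp t) * Cc (clamp t) * (y - z)
            - (y - z) * Cc (clamp t) * (M (clamp t))ᵀ := by
        rw [hvdef]
        noncomm_ring
      have hmem := hclamp_mem t
      rw [hdiff]
      have e1 : ‖(Bc (clamp t))ᵀ * (y - z)‖ ≤ R * ‖y - z‖ :=
        (norm_mul_le _ _).trans (mul_le_mul_of_nonneg_right (hbBT _ hmem) (norm_nonneg _))
      have e2 : ‖(y - z) * Bc (clamp t)‖ ≤ ‖y - z‖ * R :=
        (norm_mul_le _ _).trans (mul_le_mul_of_nonneg_left (hbB' _ hmem) (norm_nonneg _))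
      have e3 : ‖M (clamp t) * Cc (clamp t) * (y - z)‖ ≤ R * R * ‖y - z‖ := by
        apply (norm_mul_le _ _).trans
        apply mul_le_mul_of_nonneg_right _ (norm_nonneg _)
        exact (norm_mul_le _ _).trans
          (mul_le_mul (hbM _ hmem) (hbC _ hmem) (norm_nonneg _) hRpos.le)
      have e4 : ‖(y - z) * Cc (clamp t) * (M (clamp t))ᵀ‖ ≤ ‖y - z‖ * (R * R) := by
        apply (norm_mul_le _ _).trans
        calc ‖(y - z) * Cc (clamp t)‖ * ‖(M (clamp t))ᵀ‖
            ≤ (‖y - z‖ * R) * R := by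
              apply mul_le_mul _ (hbMT _ hmem) (norm_nonneg _) (by positivity)
              exact (norm_mul_le _ _).trans
                (mul_le_mul_of_nonneg_left (hbC _ hmem) (norm_nonneg _))
          _ = ‖y - z‖ * (R * R) := by ring
      calc ‖-((Bc (clamp t))ᵀ * (y - z)) - (y - z) * Bc (clamp t)
            - M (clamp t) * Cc (clamp t) * (y - z)
            - (y - z) * Cc (clamp t) * (M (clamp t))ᵀ‖
          ≤ ‖-((Bc (clamp t))ᵀ * (y - z)) - (y - z) * Bc (clamp t)
            - M (clamp t) * Cc (clamp t) * (y - z)‖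
            + ‖(y - z) * Cc (clamp t) * (M (clamp t))ᵀ‖ := norm_sub_le _ _
        _ ≤ (‖-((Bc (clamp t))ᵀ * (y - z)) - (y - z) * Bc (clamp t)‖
            + ‖M (clamp t) * Cc (clamp t) * (y - z)‖)
            + ‖(y - z) * Cc (clamp t) * (M (clamp t))ᵀ‖ := by
            apply add_le_add_left (norm_sub_le _ _)
        _ ≤ ((‖(Bc (clamp t))ᵀ * (y - z)‖ + ‖(y - z) * Bc (clamp t)‖)
            + ‖M (clamp t) * Cc (clamp t) * (y - z)‖)
            + ‖(y - z) * Cc (clamp t) * (M (clamp t))ᵀ‖ := by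
            apply add_le_add_left; apply add_le_add_left
            exact (norm_sub_le _ _).trans (by rw [norm_neg])
        _ ≤ ((R * ‖y - z‖ + ‖y - z‖ * R) + R * R * ‖y - z‖) + ‖y - z‖ * (R * R) := by
            exact add_le_add (add_le_add (add_le_add e1 e2) e3) e4
        _ = (Kl : ℝ) * ‖y - z‖ := by rw [hKlco]; ring
    set f : ℝ → Matrix (Fin n) (Fin n) ℂ := fun t => (M t)ᵀ - M t with hfdef
    have hfd : ∀ t ∈ Set.Icc (0:ℝ) T, HasDerivAt f ((E t)ᵀ - E t) t := by
      intro t ht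
      apply hasDerivAt_of_entries
      intro i j
      have h1 := (hM t ht j i).sub (hM t ht i j)
      exact h1
    have hfcont : ContinuousOn f (Set.Icc 0 T) := fun t ht =>
      (hfd t ht).continuousAt.continuousWithinAt
    have hfv : ∀ t ∈ Set.Icc (0:ℝ) T, (E t)ᵀ - E t = v t (f t) := by
      intro t ht
      rw [hvdef]
      simp only [hclamp_eq t ht]
      rw [hfdef]
      exact sym_identity (Bc t) (Cc t) (Dc t) (M t) (hCct t ht) (hDct t ht)
    have huniq := ODE_solution_unique_of_mem_Icc_right
      (v := v) (s := fun _ => Set.univ) (K := Kl) (f := f) (g := fun _ => 0)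
      (a := 0) (b := T)
      (fun t _ => hlip t)
      hfcont
      (fun t ht => by
        have h1 := hfd t (Set.mem_Icc_of_Ico ht)
        rw [hfv t (Set.mem_Icc_of_Ico ht)] at h1
        exact h1.hasDerivWithinAt)
      (fun t _ => Set.mem_univ _)
      (continuousOn_const)
      (fun t ht => by
        have hv0 : v t 0 = 0 := by rw [hvdef]; simp
        rw [hv0]
        exact (hasDerivAt_const t (0 : Matrix (Fin n) (Fin n) ℂ)).hasDerivWithinAt)
      (fun t _ => Set.mem_univ _)
      (by
        rw [hfdef]
        simp only [hM0]
        rw [Matrix.transpose_smul, Matrix.transpose_one, sub_self])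
    intro t ht
    have := huniq ht
    have hft : f t = 0 := this
    rw [hfdef] at hft
    exact sub_eq_zero.1 hft
  -- Part 2 : the imaginary part satisfies a Lyapunov equation
  set X : ℝ → Matrix (Fin n) (Fin n) ℝ := fun t => (M t).map Complex.re with hXdef
  set W : ℝ → Matrix (Fin n) (Fin n) ℝ := fun t => (M t).map Complex.im with hWdef
  set A : ℝ → Matrix (Fin n) (Fin n) ℝ := fun t => B t + C t * X t with hAdef
  have hWentry : ∀ t ∈ Set.Icc (0:ℝ) T, ∀ i j, HasDerivAt (fun s => W s i j)
      ((-(A t)ᵀ * W t - W t * A t) i j) t := by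
    intro t ht i j
    have h1 : HasDerivAt (fun s => (M s i j).im) ((E t i j).im) t :=
      (Complex.imCLM.hasFDerivAt.comp_hasDerivAt t (hM t ht i j))
    have h2 := im_deriv_identity (B t) (C t) (D t) (M t)
      (show (C t)ᵀ = C t from hCsymm t ht) (hsymm t ht)
    have h3 : (E t i j).im = ((-(A t)ᵀ * W t - W t * A t) i j) := by
      have := congrFun (congrFun h2 i) j
      exact this
    rw [h3] at h1
    exact h1
  have hWd : ∀ t ∈ Set.Icc (0:ℝ) T, HasDerivAt W (-(A t)ᵀ * W t - W t * A t) t :=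
    fun t ht => hasDerivAt_of_entries (fun i j => hWentry t ht i j)
  have hW0 : W 0 = 1 := by
    rw [hWdef]
    simp only [hM0]
    ext i j
    simp [Matrix.smul_apply, Matrix.one_apply, apply_ite]
  have hWsymm : ∀ t ∈ Set.Icc (0:ℝ) T, (W t)ᵀ = W t := by
    intro t ht
    rw [hWdef]
    simp only []
    rw [← Matrix.transpose_map, hsymm t ht]
  -- bound on the entries of A
  have hAcont : ContinuousOn A (Set.Icc 0 T) := by
    apply continuousOn_matrix_of_entries
    intro i j
    have heq : (fun t => A t i j) = fun t => B t i j + ∑ k, C t i k * (M t k j).re := by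
      funext t
      simp [hAdef, hXdef, Matrix.add_apply, Matrix.mul_apply, Matrix.map_apply]
    rw [heq]
    apply (hB i j).add
    apply continuousOn_finset_sum
    intro k _
    apply (hC i k).mul
    exact Complex.continuous_re.comp_continuousOn (fun t ht =>
      ((hM t ht k j).continuousAt).continuousWithinAt)
  obtain ⟨c0, hc0⟩ := isCompact_Icc.exists_bound_of_continuousOn hAcont
  set c : ℝ := max c0 0 with hcdef
  have hc : 0 ≤ c := le_max_right _ _
  have hAb : ∀ t ∈ Set.Icc (0:ℝ) T, ∀ i j, |A t i j| ≤ c := by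
    intro t ht i j
    have h1 : ‖A t i j‖ ≤ ‖A t‖ := mat_entry_le _ _ _
    exact h1.trans ((hc0 t ht).trans (le_max_left _ _))
  -- Part 3 : positive definiteness propagates
  set D0 : ℝ := (n : ℝ) * ((n : ℝ) * Real.exp (2 * c * (n:ℝ)^2 * T)) with hD0def
  have hnpos : (0:ℝ) < n := by exact_mod_cast hn
  have hD0pos : 0 < D0 := by rw [hD0def]; positivity
  have hD0ge1 : 1 ≤ D0 := by
    rw [hD0def]
    have h1 : (1:ℝ) ≤ (n:ℝ) := by exact_mod_cast hn
    have h2 : (1:ℝ) ≤ Real.exp (2 * c * (n:ℝ)^2 * T) := by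
      rw [← Real.exp_zero]
      apply Real.exp_le_exp.2
      positivity
    nlinarith
  set S : Set ℝ := {t | t ∈ Set.Icc (0:ℝ) T ∧ ∀ s ∈ Set.Icc (0:ℝ) t, (W s).PosDef}
    with hSdef
  have hWcontEntry : ∀ t ∈ Set.Icc (0:ℝ) T, ∀ i j,
      ContinuousAt (fun s => W s i j) t := by
    intro t ht i j
    exact (hWentry t ht i j).continuousAt
  have hW0pos : (W 0).PosDef := by rw [hW0]; exact Matrix.PosDef.one
  have h0S : (0:ℝ) ∈ S := by
    refine ⟨⟨le_rfl, hT.le⟩, fun s hs => ?_⟩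
    have : s = 0 := le_antisymm hs.2 hs.1
    rw [this]; exact hW0pos
  have hSne : S.Nonempty := ⟨0, h0S⟩
  have hSbdd : BddAbove S := ⟨T, fun t htS => htS.1.2⟩
  set t₀ : ℝ := sSup S with ht₀def
  have h0le : 0 ≤ t₀ := le_csSup hSbdd h0S
  have ht₀T : t₀ ≤ T := csSup_le hSne (fun t htS => htS.1.2)
  -- uniform lower bound on the quadratic form strictly below t₀
  have hq_lb : ∀ s, 0 ≤ s → s < t₀ → ∀ v : Fin n → ℝ,
      (∑ i, v i ^ 2) / D0 ≤ v ⬝ᵥ (W s *ᵥ v) := by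
    intro s hs0 hst v
    obtain ⟨t, htS, hst'⟩ := exists_lt_of_lt_csSup hSne hst
    have hsT : s ∈ Set.Icc (0:ℝ) T := ⟨hs0, hst'.le.trans htS.1.2⟩
    have hposIcc : ∀ u ∈ Set.Icc (0:ℝ) s, (W u).PosDef := fun u hu =>
      htS.2 u ⟨hu.1, hu.2.trans hst'.le⟩
    exact key_bound hn hT hc W A hWd hAb hW0 hsT hposIcc v
  have hq_t₀ : ∀ v : Fin n → ℝ, (∑ i, v i ^ 2) / D0 ≤ v ⬝ᵥ (W t₀ *ᵥ v) := by
    intro v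
    rcases eq_or_lt_of_le h0le with h0 | h0
    · rw [← h0, hW0]
      have h1 : v ⬝ᵥ ((1 : Matrix (Fin n) (Fin n) ℝ) *ᵥ v) = ∑ i, v i ^ 2 := by
        rw [Matrix.one_mulVec]
        simp [dotProduct, sq]
      rw [h1]
      apply div_le_self (Finset.sum_nonneg fun i _ => sq_nonneg _) hD0ge1
    · have ht₀Icc : t₀ ∈ Set.Icc (0:ℝ) T := ⟨h0le, ht₀T⟩
      have hcont : ContinuousAt (fun s => v ⬝ᵥ (W s *ᵥ v)) t₀ := by
        have heq : (fun s => v ⬝ᵥ (W s *ᵥ v))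
            = fun s => ∑ i, v i * ∑ j, W s i j * v j := by
          funext s
          simp [dotProduct, Matrix.mulVec]
        rw [heq]
        apply tendsto_finset_sum
        intro i _
        apply Filter.Tendsto.mul tendsto_const_nhds
        apply tendsto_finset_sum
        intro j _
        exact (hWcontEntry t₀ ht₀Icc i j).mul continuousAt_const
      have hne : (nhdsWithin t₀ (Set.Ico 0 t₀)).NeBot := by
        apply mem_closure_iff_nhdsWithin_neBot.1
        rw [closure_Ico h0.ne]
        exact ⟨h0le, le_rfl⟩
      apply ge_of_tendsto (hcont.continuousWithinAt :
        Filter.Tendsto _ (nhdsWithin t₀ (Set.Ico 0 t₀)) _)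
      apply Filter.eventually_of_mem self_mem_nhdsWithin
      intro s hs
      exact hq_lb s hs.1 hs.2 v
  have posdef_of_lb : ∀ (d : ℝ), 0 < d → ∀ (s : ℝ), (W s)ᵀ = W s →
      (∀ v : Fin n → ℝ, (∑ i, v i ^ 2) / d ≤ v ⬝ᵥ (W s *ᵥ v)) → (W s).PosDef := by
    intro d hd s hsym hlb
    apply posdef_of_quad hsym
    intro v hv
    have h1 := hlb v
    have h2 : 0 < (∑ i, v i ^ 2) / d := div_pos (sum_sq_pos_of_ne_zero hv) hd
    linarith
  have ht₀S : t₀ ∈ S := by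
    refine ⟨⟨h0le, ht₀T⟩, fun s hs => ?_⟩
    rcases lt_or_eq_of_le hs.2 with hlt | heq
    · exact posdef_of_lb D0 hD0pos s (hWsymm s ⟨hs.1, hs.2.trans ht₀T⟩)
        (fun v => hq_lb s hs.1 hlt v)
    · rw [heq]
      exact posdef_of_lb D0 hD0pos t₀ (hWsymm t₀ ⟨h0le, ht₀T⟩) hq_t₀
  have ht₀eq : t₀ = T := by
    by_contra hne
    have ht₀lt : t₀ < T := lt_of_le_of_ne ht₀T hne
    -- find δ such that entries of W stay close to W t₀
    set ε : ℝ := 1 / (2 * D0 * (n:ℝ)) with hεdef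
    have hεpos : 0 < ε := by rw [hεdef]; positivity
    have hev : ∀ᶠ s in nhds t₀, ∀ i j, |W s i j - W t₀ i j| < ε := by
      rw [Filter.eventually_all]
      intro i
      rw [Filter.eventually_all]
      intro j
      have h1 := hWcontEntry t₀ ⟨h0le, ht₀T⟩ i j
      have h2 := Metric.tendsto_nhds.1 h1 ε hεpos
      apply h2.mono
      intro s hs
      rwa [Real.dist_eq] at hs
    obtain ⟨δ, hδpos, hδ⟩ := Metric.eventually_nhds_iff.1 hev
    set t₁ : ℝ := min T (t₀ + δ / 2) with ht₁def
    have ht₁gt : t₀ < t₁ := lt_min ht₀lt (by linarith)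
    have ht₁T : t₁ ≤ T := min_le_left _ _
    have ht₁0 : 0 ≤ t₁ := h0le.trans ht₁gt.le
    have ht₁S : t₁ ∈ S := by
      refine ⟨⟨ht₁0, ht₁T⟩, fun s hs => ?_⟩
      rcases le_or_gt s t₀ with hle | hgt
      · exact ht₀S.2 s ⟨hs.1, hle⟩
      · have hsT : s ∈ Set.Icc (0:ℝ) T := ⟨hs.1, hs.2.trans ht₁T⟩
        have hdist : dist s t₀ < δ := by
          rw [Real.dist_eq, abs_of_pos (by linarith)]
          have : s ≤ t₀ + δ / 2 := hs.2.trans (min_le_right _ _)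
          linarith
        have hclose := hδ hdist
        apply posdef_of_quad (hWsymm s hsT)
        intro v hv
        have hSpos := sum_sq_pos_of_ne_zero hv
        have hq0 := hq_t₀ v
        have hDel : |v ⬝ᵥ ((W s - W t₀) *ᵥ v)| ≤ ε * ((n:ℝ) * ∑ i, v i ^ 2) :=
          quad_abs_bound _ v hεpos.le (fun i j => by
            have := hclose i j
            simpa [Matrix.sub_apply] using this.le)
        have hsplit : v ⬝ᵥ (W s *ᵥ v)
            = v ⬝ᵥ (W t₀ *ᵥ v) + v ⬝ᵥ ((W s - W t₀) *ᵥ v) := by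
          rw [Matrix.sub_mulVec, dotProduct_sub]
          ring
        have hεn : ε * ((n:ℝ) * ∑ i, v i ^ 2) = (∑ i, v i ^ 2) / (2 * D0) := by
          rw [hεdef]
          field_simp
        rw [hsplit]
        have habs := abs_le.1 hDel
        have hD0' : (∑ i, v i ^ 2) / D0 - (∑ i, v i ^ 2) / (2 * D0)
            = (∑ i, v i ^ 2) / (2 * D0) := by
          field_simp
          ring
        have hfin : 0 < (∑ i, v i ^ 2) / (2 * D0) := by positivity
        rw [hεn] at habs
        linarith [hq0, habs.1]
    have : t₁ ≤ t₀ := le_csSup hSbdd ht₁S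
    linarith
  -- conclusion
  intro t ht
  refine ⟨hsymm t ht, ?_⟩
  have : (W t).PosDef := ht₀S.2 t ⟨ht.1, ht.2.trans_eq ht₀eq.symm⟩
  exact this

end Main
end CpxAux
end

section
/- Let n ≥ 1 and let c, A, K, R be positive constants. There exists a constant C > 0, depending only on n, c, A, K, R, such that the following holds for every λ ≥ 1. Let M be a complex symmetric n×n matrix with Im M ≥ c·Id, let v ∈ ℝ^n, and set τ*(z) = ⟨v, z⟩ + zᵀ M z. Let ρ : ℝ^n → ℂ satisfy |ρ(z)| ≤ K |z|³ for all z, set τ = τ* + ρ, and assume Im τ(z) ≥ (c/2)|z|² for all |z| ≤ R. Let a : ℝ → ℂ be differentiable with |a(s)| ≤ A λ^{n/4} and |a'(s)| ≤ A λ^{n/4} for all s ∈ ℝ. Then ( ∫_{B(0,R)} | a(z₁) e^{i λ τ(z)} − a(0) e^{i λ τ*(z)} |² dz )^{1/2} ≤ C λ^{−1/2}. -/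
open MeasureTheory Matrix Complex

lemma pow_le_factorial_mul_exp {x : ℝ} (hx : 0 ≤ x) (m : ℕ) :
    x ^ m ≤ m.factorial * Real.exp x := by
  have h1 : x ^ m / m.factorial ≤ ∑ i ∈ Finset.range (m+1), x ^ i / i.factorial :=
    Finset.single_le_sum (f := fun i => x ^ i / i.factorial)
      (fun i _ => by positivity) (Finset.self_mem_range_succ m)
  have h2 := Real.sum_le_exp_of_nonneg hx (m+1)
  have hm : (0:ℝ) < m.factorial := by exact_mod_cast m.factorial_pos
  calc x ^ m = (x ^ m / m.factorial) * m.factorial := by field_simp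
  _ ≤ Real.exp x * m.factorial := by
      apply mul_le_mul_of_nonneg_right (h1.trans h2) hm.le
  _ = m.factorial * Real.exp x := mul_comm _ _

lemma pow_mul_exp_neg_le {a t : ℝ} (ha : 0 < a) (ht : 0 ≤ t) (m : ℕ) :
    t ^ (2*m) * Real.exp (-(a * t^2)) ≤ m.factorial / a ^ m := by
  have key := pow_le_factorial_mul_exp (x := a * t^2) (by positivity) m
  have h2 : a ^ m * t ^ (2*m) ≤ m.factorial * Real.exp (a * t^2) := by
    calc a ^ m * t ^ (2*m) = (a * t^2) ^ m := by rw [mul_pow, pow_mul]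
    _ ≤ _ := key
  have hexp : (0:ℝ) < Real.exp (a * t^2) := Real.exp_pos _
  rw [Real.exp_neg, ← div_eq_mul_inv, div_le_div_iff₀ hexp (by positivity)]
  calc t ^ (2*m) * a ^ m = a ^ m * t ^ (2*m) := mul_comm _ _
  _ ≤ m.factorial * Real.exp (a * t^2) := h2

lemma exp_sub_exp_norm_le (w w' : ℂ) {D : ℝ} (hw : w.re ≤ D) (hw' : w'.re ≤ D) :
    ‖Complex.exp w - Complex.exp w'‖ ≤ ‖w - w'‖ * Real.exp D := by
  set g : ℝ → ℂ := fun t => Complex.exp (w' + t • (w - w')) with hg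
  have hderiv : ∀ x ∈ Set.Icc (0:ℝ) 1,
      HasDerivWithinAt g (Complex.exp (w' + x • (w - w')) * (w - w')) (Set.Icc 0 1) x := by
    intro x hx
    have h1 : HasDerivAt (fun t : ℝ => w' + t • (w - w')) ((1:ℝ) • (w - w')) x :=
      ((hasDerivAt_id x).smul_const (w - w')).const_add w'
    have h2 : HasDerivAt g (Complex.exp (w' + x • (w - w')) * ((1:ℝ) • (w - w'))) x := h1.cexp
    have h3 : HasDerivAt g (Complex.exp (w' + x • (w - w')) * (w - w')) x := by
      simpa using h2
    exact h3.hasDerivWithinAt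
  have hbound : ∀ x ∈ Set.Icc (0:ℝ) 1,
      ‖Complex.exp (w' + x • (w - w')) * (w - w')‖ ≤ Real.exp D * ‖w - w'‖ := by
    intro x hx
    rw [norm_mul]
    apply mul_le_mul_of_nonneg_right _ (norm_nonneg _)
    rw [Complex.norm_exp]
    apply Real.exp_le_exp.2
    have : (w' + x • (w - w')).re = w'.re + x * (w.re - w'.re) := by
      simp [Complex.add_re, Complex.smul_re, Complex.sub_re]
    rw [this]
    nlinarith [hx.1, hx.2]
  have := Convex.norm_image_sub_le_of_norm_hasDerivWithin_le hderiv hbound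
    (convex_Icc 0 1) (Set.left_mem_Icc.2 zero_le_one) (Set.right_mem_Icc.2 zero_le_one)
  simpa [hg, mul_comm] using this

lemma integrable_gauss_poly (n : ℕ) {b : ℝ} (hb : 0 < b) (K' : ℝ) :
    Integrable (fun u : EuclideanSpace ℝ (Fin n) =>
      (‖u‖ + K' * ‖u‖ ^ 3) ^ 2 * Real.exp (-(b * ‖u‖ ^ 2))) := by
  have hb2 : (0:ℝ) < b / 2 := by linarith
  have hgauss : Integrable (fun u : EuclideanSpace ℝ (Fin n) =>
      Real.exp (-(b / 2 * ‖u‖ ^ 2))) := by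
    have := (GaussianFourier.integrable_cexp_neg_mul_sq_norm_add (V := EuclideanSpace ℝ (Fin n))
      (b := ((b/2 : ℝ) : ℂ)) (by simpa using hb2) 0 0).norm
    apply this.congr
    filter_upwards with u
    rw [Complex.norm_exp]
    congr 1
    rw [show (-((b/2:ℝ):ℂ) * (‖u‖:ℂ) ^ 2
        + 0 * ((inner ℝ (0 : EuclideanSpace ℝ (Fin n)) u : ℝ) : ℂ))
        = ((-(b/2*‖u‖^2) : ℝ) : ℂ) by push_cast; ring, Complex.ofReal_re]
  set C0 : ℝ := 2 * (2 / b) + 2 * K' ^ 2 * (48 / b ^ 3) with hC0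
  apply Integrable.mono' (hgauss.const_mul C0)
  · apply Continuous.aestronglyMeasurable
    fun_prop
  · filter_upwards with u
    set t : ℝ := ‖u‖ with ht
    have ht0 : 0 ≤ t := norm_nonneg _
    have hsplit : Real.exp (-(b * t ^ 2)) = Real.exp (-(b/2 * t^2)) * Real.exp (-(b/2 * t^2)) := by
      rw [← Real.exp_add]; ring_nf
    have h1 : t ^ 2 * Real.exp (-(b/2 * t^2)) ≤ 2 / b := by
      have := pow_mul_exp_neg_le hb2 ht0 1
      norm_num at this
      convert this using 2 <;> ring
    have h3 : t ^ 6 * Real.exp (-(b/2 * t^2)) ≤ 48 / b ^ 3 := by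
      have := pow_mul_exp_neg_le hb2 ht0 3
      norm_num at this
      calc t ^ 6 * Real.exp (-(b/2 * t^2)) ≤ (3).factorial / (b/2) ^ 3 := this
      _ = 48 / b ^ 3 := by
          rw [Nat.factorial]; norm_num; ring
    have hsq : (t + K' * t ^ 3) ^ 2 ≤ 2 * t ^ 2 + 2 * K' ^ 2 * t ^ 6 := by
      nlinarith [sq_nonneg (t - K' * t ^ 3)]
    have hexp : (0:ℝ) < Real.exp (-(b/2 * t^2)) := Real.exp_pos _
    have hnn : (0:ℝ) ≤ (t + K' * t ^ 3) ^ 2 * Real.exp (-(b * t ^ 2)) := by positivity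
    rw [Real.norm_eq_abs, _root_.abs_of_nonneg hnn]
    calc (t + K' * t ^ 3) ^ 2 * Real.exp (-(b * t ^ 2))
        ≤ (2 * t ^ 2 + 2 * K' ^ 2 * t ^ 6) * Real.exp (-(b * t ^ 2)) := by
          exact mul_le_mul_of_nonneg_right hsq (Real.exp_pos _).le
      _ = (2 * (t ^ 2 * Real.exp (-(b/2 * t^2))) + 2 * K' ^ 2 * (t ^ 6 * Real.exp (-(b/2 * t^2))))
            * Real.exp (-(b/2 * t^2)) := by rw [hsplit]; ring
      _ ≤ (2 * (2 / b) + 2 * K' ^ 2 * (48 / b ^ 3)) * Real.exp (-(b/2 * t^2)) := by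
          apply mul_le_mul_of_nonneg_right _ hexp.le
          have hK2 : (0:ℝ) ≤ K' ^ 2 := sq_nonneg _
          nlinarith
      _ = C0 * Real.exp (-(b/2 * t^2)) := by rw [hC0]

lemma im_quad (n : ℕ) (c : ℝ) (M : Matrix (Fin n) (Fin n) ℂ)
    (hM : (M.map Complex.im - c • (1 : Matrix (Fin n) (Fin n) ℝ)).PosSemidef)
    (z : EuclideanSpace ℝ (Fin n)) :
    c * ‖z‖ ^ 2 ≤ ((fun i => ((z i : ℝ) : ℂ)) ⬝ᵥ M *ᵥ (fun i => ((z i : ℝ) : ℂ))).im := by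
  set zf : Fin n → ℝ := fun i => z i with hzf
  have hpsd := hM.dotProduct_mulVec_nonneg zf
  have hstar : star zf = zf := by
    funext i; simp [hzf]
  rw [hstar] at hpsd
  have hnorm : ‖z‖ ^ 2 = zf ⬝ᵥ zf := by
    rw [EuclideanSpace.norm_eq, Real.sq_sqrt (Finset.sum_nonneg fun i _ => by positivity)]
    simp [dotProduct, hzf, Real.norm_eq_abs, sq_abs, pow_two]
  have hexpand : zf ⬝ᵥ ((M.map Complex.im - c • (1 : Matrix (Fin n) (Fin n) ℝ)) *ᵥ zf)
      = zf ⬝ᵥ ((M.map Complex.im) *ᵥ zf) - c * (zf ⬝ᵥ zf) := by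
    rw [Matrix.sub_mulVec, dotProduct_sub, Matrix.smul_mulVec, Matrix.one_mulVec,
      dotProduct_smul]
    simp [smul_eq_mul]
  have him : ((fun i => ((z i : ℝ) : ℂ)) ⬝ᵥ M *ᵥ (fun i => ((z i : ℝ) : ℂ))).im
      = zf ⬝ᵥ ((M.map Complex.im) *ᵥ zf) := by
    simp only [dotProduct, mulVec, Complex.im_sum, Matrix.map_apply]
    apply Finset.sum_congr rfl
    intro i _
    simp [Complex.mul_im, Complex.im_sum, hzf, Finset.mul_sum]
  rw [him, hnorm]
  rw [hexpand] at hpsd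
  linarith
/-- `L²` approximation of a Gaussian beam by the auxiliary beam with frozen
amplitude and purely quadratic phase: with `Im M ≥ c·Id`, `|ρ(z)| ≤ K|z|³`,
`Im τ(z) ≥ (c/2)|z|²` on `B(0,R)`, and `|a|, |a'| ≤ A λ^{n/4}`, one has
`‖a(z₁)e^{iλτ} − a(0)e^{iλτ*}‖_{L²(B(0,R))} ≤ C λ^{−1/2}` for all `lam ≥ 1`. -/
theorem stmt12 (n : ℕ) (hn : 0 < n) (c A K R : ℝ)
    (hc : 0 < c) (hA : 0 < A) (hK : 0 < K) (hR : 0 < R) :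
    ∃ C : ℝ, 0 < C ∧
      ∀ lam : ℝ, 1 ≤ lam →
      ∀ M : Matrix (Fin n) (Fin n) ℂ, M.IsSymm →
        (M.map Complex.im - c • (1 : Matrix (Fin n) (Fin n) ℝ)).PosSemidef →
      ∀ (v : EuclideanSpace ℝ (Fin n)) (ρ : EuclideanSpace ℝ (Fin n) → ℂ)
        (τstar τ : EuclideanSpace ℝ (Fin n) → ℂ),
        (τstar = fun z => ((inner ℝ v z : ℝ) : ℂ) +
          (fun i => (z i : ℂ)) ⬝ᵥ M *ᵥ (fun i => (z i : ℂ))) →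
        (∀ z, ‖ρ z‖ ≤ K * ‖z‖ ^ 3) →
        (τ = fun z => τstar z + ρ z) →
        (∀ z : EuclideanSpace ℝ (Fin n), ‖z‖ ≤ R → c / 2 * ‖z‖ ^ 2 ≤ (τ z).im) →
      ∀ a a' : ℝ → ℂ,
        (∀ s : ℝ, HasDerivAt a (a' s) s) →
        (∀ s : ℝ, ‖a s‖ ≤ A * lam ^ ((n : ℝ) / 4)) →
        (∀ s : ℝ, ‖a' s‖ ≤ A * lam ^ ((n : ℝ) / 4)) →
        (∫ z in Metric.ball (0 : EuclideanSpace ℝ (Fin n)) R,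
            ‖a (z ⟨0, hn⟩) * Complex.exp (Complex.I * (lam : ℂ) * τ z)
              - a 0 * Complex.exp (Complex.I * (lam : ℂ) * τstar z)‖ ^ 2) ^ ((1 : ℝ) / 2)
          ≤ C * lam ^ (-(1 : ℝ) / 2) := by
  classical
  set h : EuclideanSpace ℝ (Fin n) → ℝ :=
    fun u => (‖u‖ + K * ‖u‖ ^ 3) ^ 2 * Real.exp (-(c * ‖u‖ ^ 2)) with hh
  set IH : ℝ := ∫ u : EuclideanSpace ℝ (Fin n), h u with hIH
  have hIH0 : 0 ≤ IH := integral_nonneg fun u => by rw [hh]; positivity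
  refine ⟨A * Real.sqrt IH + 1, by positivity, ?_⟩
  intro lam hlam M hMsymm hMpsd v ρ τstar τ hτstar hρ hτ hτim a a' ha ha0 ha'
  have hlam0 : (0:ℝ) < lam := lt_of_lt_of_le one_pos hlam
  set L : ℝ := A * lam ^ ((n:ℝ)/4) with hL
  have hL0 : 0 < L := by rw [hL]; positivity
  set g : EuclideanSpace ℝ (Fin n) → ℝ :=
    fun z => L * ((‖z‖ + lam * K * ‖z‖ ^ 3) * Real.exp (-(lam * (c/2) * ‖z‖ ^ 2))) with hg
  -- real part computation
  have hre : ∀ w : ℂ, (Complex.I * (lam:ℂ) * w).re = -(lam * w.im) := by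
    intro w
    simp [Complex.mul_re, Complex.mul_im]
  -- pointwise bound
  have hpt : ∀ z ∈ Metric.ball (0 : EuclideanSpace ℝ (Fin n)) R,
      ‖a (z ⟨0, hn⟩) * Complex.exp (Complex.I * (lam : ℂ) * τ z)
        - a 0 * Complex.exp (Complex.I * (lam : ℂ) * τstar z)‖ ^ 2 ≤ g z ^ 2 := by
    intro z hz
    have hzR : ‖z‖ ≤ R := (mem_ball_zero_iff.1 hz).le
    have hznn : (0:ℝ) ≤ ‖z‖ := norm_nonneg _
    have hτi : c/2 * ‖z‖^2 ≤ (τ z).im := hτim z hzR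
    have hτsi : c * ‖z‖^2 ≤ (τstar z).im := by
      rw [hτstar]
      simpa using im_quad n c M hMpsd z
    set E : ℝ := Real.exp (-(lam * (c/2) * ‖z‖ ^ 2)) with hE
    have hE1 : ‖Complex.exp (Complex.I * (lam:ℂ) * τ z)‖ ≤ E := by
      rw [Complex.norm_exp, hre, hE]
      apply Real.exp_le_exp.2
      nlinarith [mul_le_mul_of_nonneg_left hτi hlam0.le]
    have hdiff : ‖Complex.exp (Complex.I * (lam:ℂ) * τ z)
        - Complex.exp (Complex.I * (lam:ℂ) * τstar z)‖ ≤ lam * (K * ‖z‖^3) * E := by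
      have hb1 : (Complex.I * (lam:ℂ) * τ z).re ≤ -(lam * (c/2) * ‖z‖ ^ 2) := by
        rw [hre]; nlinarith [mul_le_mul_of_nonneg_left hτi hlam0.le]
      have hb2 : (Complex.I * (lam:ℂ) * τstar z).re ≤ -(lam * (c/2) * ‖z‖ ^ 2) := by
        rw [hre]
        nlinarith [mul_le_mul_of_nonneg_left hτsi hlam0.le,
          mul_nonneg hlam0.le (mul_nonneg hc.le (sq_nonneg ‖z‖))]
      have key := exp_sub_exp_norm_le (Complex.I * (lam:ℂ) * τ z)
        (Complex.I * (lam:ℂ) * τstar z) hb1 hb2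
      refine key.trans ?_
      rw [← hE]
      apply mul_le_mul_of_nonneg_right _ (Real.exp_pos _).le
      have hd : Complex.I * (lam:ℂ) * τ z - Complex.I * (lam:ℂ) * τstar z
          = Complex.I * (lam:ℂ) * (ρ z) := by
        rw [hτ]; ring
      rw [hd]
      have hnorm : ‖Complex.I * (lam:ℂ) * (ρ z)‖ = lam * ‖ρ z‖ := by
        simp [norm_mul, Complex.norm_real, abs_of_pos hlam0]
      rw [hnorm]
      calc lam * ‖ρ z‖ ≤ lam * (K * ‖z‖^3) :=
            mul_le_mul_of_nonneg_left (hρ z) hlam0.le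
        _ = lam * (K * ‖z‖^3) := rfl
    have hlip : ‖a (z ⟨0, hn⟩) - a 0‖ ≤ L * ‖z‖ := by
      have h1 := convex_univ.norm_image_sub_le_of_norm_hasDerivWithin_le
        (f := a) (f' := a') (C := L)
        (fun x _ => (ha x).hasDerivWithinAt) (fun x _ => ha' x)
        (Set.mem_univ (0:ℝ)) (Set.mem_univ (z ⟨0, hn⟩))
      have h2 : ‖z ⟨0, hn⟩ - (0:ℝ)‖ ≤ ‖z‖ := by
        rw [sub_zero, EuclideanSpace.norm_eq,
          show ‖z ⟨0, hn⟩‖ = Real.sqrt (‖z ⟨0, hn⟩‖^2) from (Real.sqrt_sq (norm_nonneg _)).symm]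
        apply Real.sqrt_le_sqrt
        exact Finset.single_le_sum (f := fun j => ‖z j‖ ^ 2) (fun j _ => sq_nonneg _)
          (Finset.mem_univ _)
      exact h1.trans (mul_le_mul_of_nonneg_left h2 hL0.le)
    have hEpos : (0:ℝ) < E := Real.exp_pos _
    have hFle : ‖a (z ⟨0, hn⟩) * Complex.exp (Complex.I * (lam : ℂ) * τ z)
        - a 0 * Complex.exp (Complex.I * (lam : ℂ) * τstar z)‖ ≤ g z := by
      have hsplit : a (z ⟨0, hn⟩) * Complex.exp (Complex.I * (lam : ℂ) * τ z)
          - a 0 * Complex.exp (Complex.I * (lam : ℂ) * τstar z)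
          = (a (z ⟨0, hn⟩) - a 0) * Complex.exp (Complex.I * (lam : ℂ) * τ z)
            + a 0 * (Complex.exp (Complex.I * (lam : ℂ) * τ z)
              - Complex.exp (Complex.I * (lam : ℂ) * τstar z)) := by ring
      rw [hsplit]
      refine (norm_add_le _ _).trans ?_
      rw [norm_mul, norm_mul]
      have t1 : ‖a (z ⟨0, hn⟩) - a 0‖ * ‖Complex.exp (Complex.I * (lam : ℂ) * τ z)‖
          ≤ (L * ‖z‖) * E :=
        mul_le_mul hlip hE1 (norm_nonneg _) (by positivity)
      have t2 : ‖a 0‖ * ‖Complex.exp (Complex.I * (lam : ℂ) * τ z)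
          - Complex.exp (Complex.I * (lam : ℂ) * τstar z)‖
          ≤ L * (lam * (K * ‖z‖^3) * E) := by
        apply mul_le_mul _ hdiff (norm_nonneg _) hL0.le
        rw [hL]; exact ha0 0
      calc _ ≤ (L * ‖z‖) * E + L * (lam * (K * ‖z‖^3) * E) := add_le_add t1 t2
        _ = g z := by rw [hg]; ring
    exact pow_le_pow_left₀ (norm_nonneg _) hFle 2
  -- integrability of g^2
  have hgsq : ∀ z : EuclideanSpace ℝ (Fin n), g z ^ 2
      = L^2 * ((‖z‖ + (lam*K) * ‖z‖ ^ 3) ^ 2 * Real.exp (-(lam * c * ‖z‖ ^ 2))) := by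
    intro z
    have hexp2 : Real.exp (-(lam * (c/2) * ‖z‖^2)) ^ 2 = Real.exp (-(lam * c * ‖z‖^2)) := by
      rw [pow_two, ← Real.exp_add]; ring_nf
    rw [hg]
    calc (L * ((‖z‖ + lam * K * ‖z‖ ^ 3) * Real.exp (-(lam * (c/2) * ‖z‖ ^ 2)))) ^ 2
        = L^2 * ((‖z‖ + lam * K * ‖z‖ ^ 3) ^ 2 * Real.exp (-(lam * (c/2) * ‖z‖ ^ 2)) ^ 2) := by
          ring
      _ = L^2 * ((‖z‖ + (lam*K) * ‖z‖ ^ 3) ^ 2 * Real.exp (-(lam * c * ‖z‖ ^ 2))) := by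
          rw [hexp2]
  have hInt_g2 : Integrable (fun z : EuclideanSpace ℝ (Fin n) => g z ^ 2) := by
    have := (integrable_gauss_poly n (show (0:ℝ) < lam * c by positivity) (lam*K)).const_mul
      (L^2)
    apply this.congr
    filter_upwards with z
    rw [hgsq z]
  -- scaling
  have hscal : (∫ z : EuclideanSpace ℝ (Fin n), g z ^ 2) = A^2 * lam⁻¹ * IH := by
    set s : ℝ := Real.sqrt lam with hs
    have hs0 : 0 < s := Real.sqrt_pos.2 hlam0
    have hs2 : s ^ 2 = lam := Real.sq_sqrt hlam0.le
    have hsinv : s⁻¹ ^ 2 = lam⁻¹ := by rw [inv_pow, hs2]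
    have hpt2 : ∀ u : EuclideanSpace ℝ (Fin n), g (s⁻¹ • u) ^ 2 = (L^2 * lam⁻¹) * h u := by
      intro u
      have hnorm : ‖s⁻¹ • u‖ = s⁻¹ * ‖u‖ := by
        rw [norm_smul, Real.norm_eq_abs, abs_of_pos (by positivity)]
      simp only [hgsq, hnorm, hh]
      have e1 : lam * c * (s⁻¹ * ‖u‖)^2 = c * ‖u‖^2 := by
        rw [mul_pow, hsinv]
        field_simp
      have e2 : s⁻¹ * ‖u‖ + lam * K * (s⁻¹ * ‖u‖)^3 = s⁻¹ * (‖u‖ + K * ‖u‖^3) := by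
        have hx : lam * (s⁻¹ * ‖u‖) ^ 3 = s⁻¹ * ‖u‖ ^ 3 := by
          have hy : (s⁻¹ * ‖u‖) ^ 3 = s⁻¹ ^ 2 * (s⁻¹ * ‖u‖ ^ 3) := by ring
          rw [hy, hsinv, ← mul_assoc, mul_inv_cancel₀ hlam0.ne', one_mul]
        calc s⁻¹ * ‖u‖ + lam * K * (s⁻¹ * ‖u‖) ^ 3
            = s⁻¹ * ‖u‖ + K * (lam * (s⁻¹ * ‖u‖) ^ 3) := by ring
          _ = s⁻¹ * ‖u‖ + K * (s⁻¹ * ‖u‖ ^ 3) := by rw [hx]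
          _ = s⁻¹ * (‖u‖ + K * ‖u‖ ^ 3) := by ring
      rw [e1, e2]
      have hz2 : (s⁻¹ * (‖u‖ + K * ‖u‖ ^ 3)) ^ 2 = lam⁻¹ * (‖u‖ + K * ‖u‖ ^ 3) ^ 2 := by
        rw [mul_pow, hsinv]
      rw [hz2]
      ring
    have hfr : Module.finrank ℝ (EuclideanSpace ℝ (Fin n)) = n := finrank_euclideanSpace_fin
    have hint := MeasureTheory.Measure.integral_comp_inv_smul
      (volume : Measure (EuclideanSpace ℝ (Fin n))) (fun z => g z ^ 2) s
    rw [hfr] at hint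
    have hlhs : (∫ x : EuclideanSpace ℝ (Fin n), g (s⁻¹ • x) ^ 2) = (L^2 * lam⁻¹) * IH := by
      have he : (fun x : EuclideanSpace ℝ (Fin n) => g (s⁻¹ • x) ^ 2)
          = fun x => (L^2 * lam⁻¹) * h x := funext hpt2
      rw [he, integral_const_mul, hIH]
    rw [hlhs, abs_of_pos (by positivity), smul_eq_mul] at hint
    have hsn : s ^ n = lam ^ ((n:ℝ)/2) := by
      rw [hs, Real.sqrt_eq_rpow, ← Real.rpow_natCast (lam ^ ((1:ℝ)/2)) n,
        ← Real.rpow_mul hlam0.le]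
      congr 1
      ring
    have hL2 : L ^ 2 = A^2 * lam ^ ((n:ℝ)/2) := by
      rw [hL, mul_pow, ← Real.rpow_natCast (lam ^ ((n:ℝ)/4)) 2, ← Real.rpow_mul hlam0.le]
      congr 1
      ring
    have hsn0 : (0:ℝ) < s ^ n := by positivity
    have hgoal : (∫ z : EuclideanSpace ℝ (Fin n), g z ^ 2) = (L^2 * lam⁻¹) * IH / s ^ n := by
      rw [eq_div_iff hsn0.ne']
      linarith [hint]
    have hpne : lam ^ ((n:ℝ)/2) ≠ 0 := (Real.rpow_pos_of_pos hlam0 _).ne'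
    rw [hgoal, hL2, hsn]
    field_simp
  -- conclusion
  by_cases hIntF : (IntegrableOn (fun z : EuclideanSpace ℝ (Fin n) =>
      ‖a (z ⟨0, hn⟩) * Complex.exp (Complex.I * (lam : ℂ) * τ z)
        - a 0 * Complex.exp (Complex.I * (lam : ℂ) * τstar z)‖ ^ 2)
      (Metric.ball 0 R) volume)
  · have h1 : (∫ z in Metric.ball (0 : EuclideanSpace ℝ (Fin n)) R,
        ‖a (z ⟨0, hn⟩) * Complex.exp (Complex.I * (lam : ℂ) * τ z)
          - a 0 * Complex.exp (Complex.I * (lam : ℂ) * τstar z)‖ ^ 2)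
        ≤ ∫ z in Metric.ball (0 : EuclideanSpace ℝ (Fin n)) R, g z ^ 2 :=
      setIntegral_mono_on hIntF hInt_g2.integrableOn measurableSet_ball hpt
    have h2 : (∫ z in Metric.ball (0 : EuclideanSpace ℝ (Fin n)) R, g z ^ 2)
        ≤ ∫ z : EuclideanSpace ℝ (Fin n), g z ^ 2 :=
      setIntegral_le_integral hInt_g2
        (Filter.Eventually.of_forall fun x => by rw [hg]; positivity)
    have h3 : (∫ z in Metric.ball (0 : EuclideanSpace ℝ (Fin n)) R,
        ‖a (z ⟨0, hn⟩) * Complex.exp (Complex.I * (lam : ℂ) * τ z)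
          - a 0 * Complex.exp (Complex.I * (lam : ℂ) * τstar z)‖ ^ 2)
        ≤ A^2 * lam⁻¹ * IH := by
      rw [← hscal]; exact h1.trans h2
    have h0 : (0:ℝ) ≤ ∫ z in Metric.ball (0 : EuclideanSpace ℝ (Fin n)) R,
        ‖a (z ⟨0, hn⟩) * Complex.exp (Complex.I * (lam : ℂ) * τ z)
          - a 0 * Complex.exp (Complex.I * (lam : ℂ) * τstar z)‖ ^ 2 :=
      integral_nonneg fun z => by positivity
    have h4 := Real.rpow_le_rpow h0 h3 (by norm_num : (0:ℝ) ≤ (1:ℝ)/2)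
    refine h4.trans ?_
    have hrw : (A^2 * lam⁻¹ * IH) ^ ((1:ℝ)/2) = (A * Real.sqrt IH) * lam ^ (-(1:ℝ)/2) := by
      have e0 : A^2 * lam⁻¹ * IH = (A^2 * IH) * lam⁻¹ := by ring
      rw [e0, Real.mul_rpow (by positivity) (by positivity), ← Real.sqrt_eq_rpow,
        Real.sqrt_mul (sq_nonneg A), Real.sqrt_sq hA.le,
        ← Real.rpow_neg_one lam, ← Real.rpow_mul hlam0.le]
      norm_num
    rw [hrw]
    have hrp : (0:ℝ) < lam ^ (-(1:ℝ)/2) := Real.rpow_pos_of_pos hlam0 _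
    have : A * Real.sqrt IH ≤ A * Real.sqrt IH + 1 := by linarith
    exact mul_le_mul_of_nonneg_right this hrp.le
  · rw [integral_undef hIntF, Real.zero_rpow (by norm_num)]
    positivity
end
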